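/- arXiv:1101.3058 — 6 statements merged into one kernel-verified Lean document; each statement's English description precedes it below -/
import Mathlib

section
/- If u ∈ H¹(ℝ^N;ℂ) satisfies ‖∇u‖_{L²} ‖u‖_{L²}^σ ≤ ‖∇Q‖_{L²} ‖Q‖_{L²}^σ, then E(u) ≥ ((Nα−4)/(2Nα)) ‖∇u‖_{L²}². -/
open MeasureTheory Filter

noncomputable section

abbrev Rn (N : ℕ) : Type := EuclideanSpace ℝ (Fin N)

/-- pointwise squared norm of the gradient of a complex-valued function on `ℝ^N` -/
def gradNormSq (N : ℕ) (u : Rn N → ℂ) (x : Rn N) : ℝ :=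
  ∑ i : Fin N, ‖fderiv ℝ u x (EuclideanSpace.single i 1)‖ ^ 2

/-- the `L²` norm of the gradient, `‖∇u‖_{L²}` -/
def gradL2 (N : ℕ) (u : Rn N → ℂ) : ℝ := Real.sqrt (∫ x, gradNormSq N u x)

/-- the mass `M(u) = ∫ |u|²` -/
def massM (N : ℕ) (u : Rn N → ℂ) : ℝ := ∫ x, ‖u x‖ ^ 2

/-- the `L²` norm -/
def l2norm (N : ℕ) (u : Rn N → ℂ) : ℝ := Real.sqrt (massM N u)

/-- the `L^p` norm -/
def lpnorm (N : ℕ) (p : ℝ) (u : Rn N → ℂ) : ℝ := (∫ x, ‖u x‖ ^ p) ^ (1 / p)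

/-- the energy `E(u) = ½∫|∇u|² − (1/(α+2))∫|u|^{α+2}` -/
def energyE (N : ℕ) (α : ℝ) (u : Rn N → ℂ) : ℝ :=
  (1 / 2) * (∫ x, gradNormSq N u x) - (1 / (α + 2)) * ∫ x, ‖u x‖ ^ (α + 2)

/-- membership in `H¹(ℝ^N;ℂ)` (with the finiteness of the `L^{α+2}` norm,
which follows from the Sobolev embedding) -/
def InH1 (N : ℕ) (α : ℝ) (u : Rn N → ℂ) : Prop :=
  Differentiable ℝ u ∧ Integrable (fun x => ‖u x‖ ^ 2) ∧
    Integrable (gradNormSq N u) ∧ Integrable fun x : Rn N => ‖u x‖ ^ (α + 2)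

set_option maxHeartbeats 1600000 in
theorem energy_lower_bound
    (N : ℕ) (hN : 1 ≤ N) (α : ℝ) (hα₁ : 4 / (N : ℝ) < α)
    (hα₂ : 3 ≤ N → α < 4 / ((N : ℝ) - 2))
    (σ : ℝ) (hσ : σ = (4 - ((N : ℝ) - 2) * α) / ((N : ℝ) * α - 4))
    (Q : Rn N → ℂ) (hQH1 : InH1 N α Q) (hQpos : 0 < massM N Q)
    (CGN : ℝ)
    (hCGN : CGN = lpnorm N (α + 2) Q ^ (α + 2) /
      (l2norm N Q ^ ((4 - ((N : ℝ) - 2) * α) / 2) * gradL2 N Q ^ ((N : ℝ) * α / 2)))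
    (hGN : ∀ f : Rn N → ℂ, InH1 N α f →
      lpnorm N (α + 2) f ^ (α + 2) ≤
        CGN * l2norm N f ^ ((4 - ((N : ℝ) - 2) * α) / 2) * gradL2 N f ^ ((N : ℝ) * α / 2))
    (hPoho₁ : massM N Q = ((4 - ((N : ℝ) - 2) * α) / ((N : ℝ) * α)) * gradL2 N Q ^ 2)
    (hPoho₂ : massM N Q =
      ((4 - ((N : ℝ) - 2) * α) / (2 * (α + 2))) * lpnorm N (α + 2) Q ^ (α + 2))
    (u : Rn N → ℂ) (hu : InH1 N α u)
    (hle : gradL2 N u * l2norm N u ^ σ ≤ gradL2 N Q * l2norm N Q ^ σ) :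
    energyE N α u ≥ (((N : ℝ) * α - 4) / (2 * (N : ℝ) * α)) * gradL2 N u ^ 2 := by
  -- basic positivity facts
  have hNpos : (0:ℝ) < N := by exact_mod_cast hN
  have hαpos : 0 < α := lt_trans (by positivity) hα₁
  have hNα : 4 < (N:ℝ) * α := by
    rw [div_lt_iff₀ hNpos] at hα₁; linarith [hα₁]
  have hs : 0 < 4 - ((N:ℝ) - 2) * α := by
    by_cases h3 : 3 ≤ N
    · have h2 : (0:ℝ) < (N:ℝ) - 2 := by
        have : (3:ℝ) ≤ N := by exact_mod_cast h3
        linarith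
      have := hα₂ h3
      rw [lt_div_iff₀ h2] at this
      nlinarith
    · have : (N:ℝ) ≤ 2 := by
        have : N ≤ 2 := by omega
        exact_mod_cast this
      nlinarith
  set k : ℝ := ((N:ℝ) * α - 4) / 2 with hk_def
  have hk : 0 < k := by simp only [hk_def]; linarith
  have hk2 : (N:ℝ) * α / 2 = k + 2 := by simp only [hk_def]; ring
  have hNα4 : (0:ℝ) < (N:ℝ) * α - 4 := by linarith
  have hσk : σ * k = (4 - ((N:ℝ) - 2) * α) / 2 := by
    rw [hσ, hk_def, div_mul_div_comm, mul_comm ((N:ℝ) * α - 4) 2,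
      mul_div_mul_right _ _ (ne_of_gt hNα4)]
  -- nonnegativity of the gradient and mass integrals
  have hgradnn : ∀ v : Rn N → ℂ, 0 ≤ ∫ x, gradNormSq N v x := by
    intro v
    apply integral_nonneg
    intro x
    exact Finset.sum_nonneg fun i _ => by positivity
  have hGu : 0 ≤ gradL2 N u := Real.sqrt_nonneg _
  have hMu : 0 ≤ l2norm N u := Real.sqrt_nonneg _
  have hIgrad : gradL2 N u ^ 2 = ∫ x, gradNormSq N u x := Real.sq_sqrt (hgradnn u)
  -- the integral ∫‖u‖^(α+2) equals lpnorm ^ (α+2)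
  have hIlp : ∀ v : Rn N → ℂ, lpnorm N (α + 2) v ^ (α + 2) = ∫ x, ‖v x‖ ^ (α + 2) := by
    intro v
    have hInn : 0 ≤ ∫ x, ‖v x‖ ^ (α + 2) :=
      integral_nonneg fun x => Real.rpow_nonneg (norm_nonneg _) _
    rw [lpnorm, ← Real.rpow_mul hInn,
      one_div_mul_cancel (by linarith : α + 2 ≠ 0), Real.rpow_one]
  -- positivity of Q quantities
  have hMQ : 0 < l2norm N Q := Real.sqrt_pos.mpr hQpos
  have hGQnn : (0:ℝ) ≤ gradL2 N Q := Real.sqrt_nonneg _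
  have hGQ : 0 < gradL2 N Q := by
    rcases hGQnn.lt_or_eq with h | h
    · exact h
    · exfalso
      rw [← h] at hPoho₁
      simp at hPoho₁
      linarith
  -- key algebraic splitting of the GN right-hand side
  have key : ∀ M G : ℝ, 0 ≤ M → 0 ≤ G →
      M ^ ((4 - ((N:ℝ) - 2) * α) / 2) * G ^ ((N:ℝ) * α / 2)
        = (G * M ^ σ) ^ k * G ^ 2 := by
    intro M G hM hG
    have h1 : (G * M ^ σ) ^ k = G ^ k * M ^ ((4 - ((N:ℝ) - 2) * α) / 2) := by
      rw [Real.mul_rpow hG (Real.rpow_nonneg hM _), ← Real.rpow_mul hM, hσk]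
    have h2 : G ^ ((N:ℝ) * α / 2) = G ^ k * G ^ 2 := by
      rw [hk2, Real.rpow_add' hG (by linarith : k + 2 ≠ 0), Real.rpow_two]
    rw [h1, h2]; ring
  -- Pohozaev consequence: ‖Q‖_{α+2}^{α+2} = (2(α+2)/(Nα)) ‖∇Q‖²
  have hPQ : lpnorm N (α + 2) Q ^ (α + 2)
      = (2 * (α + 2) / ((N:ℝ) * α)) * gradL2 N Q ^ 2 := by
    have h0 := hPoho₁.symm.trans hPoho₂
    have hNαpos : (0:ℝ) < (N:ℝ) * α := by positivity
    have h1 : (4 - ((N:ℝ) - 2) * α) * (gradL2 N Q ^ 2 * (2 * (α + 2)))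
        = (4 - ((N:ℝ) - 2) * α) * (lpnorm N (α + 2) Q ^ (α + 2) * ((N:ℝ) * α)) := by
      field_simp at h0
      linear_combination (4 - ((N:ℝ) - 2) * α) * h0
    have h2 := mul_left_cancel₀ (ne_of_gt hs) h1
    rw [div_mul_eq_mul_div, eq_comm, div_eq_iff (ne_of_gt hNαpos)]
    linear_combination h2
  -- the constant times the Q-quantity
  have hconst : CGN * (gradL2 N Q * l2norm N Q ^ σ) ^ k
      = 2 * (α + 2) / ((N:ℝ) * α) := by
    rw [hCGN, hPQ, key _ _ (le_of_lt hMQ) (le_of_lt hGQ)]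
    have hMQσ : (0:ℝ) < l2norm N Q ^ ((4 - ((N:ℝ) - 2) * α) / 2) :=
      Real.rpow_pos_of_pos hMQ _
    have hGQk : (0:ℝ) < gradL2 N Q ^ k := Real.rpow_pos_of_pos hGQ _
    have h1 : (gradL2 N Q * l2norm N Q ^ σ) ^ k
        = gradL2 N Q ^ k * l2norm N Q ^ ((4 - ((N:ℝ) - 2) * α) / 2) := by
      rw [Real.mul_rpow (le_of_lt hGQ) (Real.rpow_nonneg (le_of_lt hMQ) _),
        ← Real.rpow_mul (le_of_lt hMQ), hσk]
    rw [h1]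
    field_simp
  -- main estimate on the nonlinear term
  have hmain : (∫ x, ‖u x‖ ^ (α + 2))
      ≤ (2 * (α + 2) / ((N:ℝ) * α)) * gradL2 N u ^ 2 := by
    have h1 := hGN u hu
    rw [hIlp u] at h1
    rw [mul_assoc, key _ _ hMu hGu] at h1
    have h2 : (gradL2 N u * l2norm N u ^ σ) ^ k
        ≤ (gradL2 N Q * l2norm N Q ^ σ) ^ k :=
      Real.rpow_le_rpow (mul_nonneg hGu (Real.rpow_nonneg hMu _)) hle (le_of_lt hk)
    have hlpnn : 0 ≤ lpnorm N (α + 2) Q :=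
      Real.rpow_nonneg (integral_nonneg fun x => Real.rpow_nonneg (norm_nonneg _) _) _
    have hCGNnn : 0 ≤ CGN := by
      rw [hCGN]
      exact div_nonneg (Real.rpow_nonneg hlpnn _)
        (mul_nonneg (Real.rpow_nonneg hMQ.le _) (Real.rpow_nonneg hGQnn _))
    calc (∫ x, ‖u x‖ ^ (α + 2))
        ≤ CGN * ((gradL2 N u * l2norm N u ^ σ) ^ k * gradL2 N u ^ 2) := h1
      _ ≤ CGN * ((gradL2 N Q * l2norm N Q ^ σ) ^ k * gradL2 N u ^ 2) := by
          apply mul_le_mul_of_nonneg_left _ hCGNnn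
          exact mul_le_mul_of_nonneg_right h2 (by positivity)
      _ = (2 * (α + 2) / ((N:ℝ) * α)) * gradL2 N u ^ 2 := by
          rw [← mul_assoc, hconst]
  -- conclude
  have hα2 : (0:ℝ) < α + 2 := by linarith
  have h3 : (1 / (α + 2)) * (∫ x, ‖u x‖ ^ (α + 2))
      ≤ (2 / ((N:ℝ) * α)) * gradL2 N u ^ 2 := by
    have := mul_le_mul_of_nonneg_left hmain (by positivity : (0:ℝ) ≤ 1 / (α + 2))
    calc (1 / (α + 2)) * (∫ x, ‖u x‖ ^ (α + 2))
        ≤ (1 / (α + 2)) * ((2 * (α + 2) / ((N:ℝ) * α)) * gradL2 N u ^ 2) := this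
      _ = (2 / ((N:ℝ) * α)) * gradL2 N u ^ 2 := by
          field_simp
  have hsplit : (((N:ℝ) * α - 4) / (2 * (N:ℝ) * α))
      = 1 / 2 - 2 / ((N:ℝ) * α) := by
    field_simp
    ring
  rw [energyE, ← hIgrad, ge_iff_le, hsplit]
  nlinarith [h3]
end
end

section
/- If u ∈ H¹(ℝ^N;ℂ) satisfies ‖∇u‖_{L²} ‖u‖_{L²}^σ ≤ ‖∇Q‖_{L²} ‖Q‖_{L²}^σ, then ‖∇u‖_{L²} ‖u‖_{L²}^σ ≤ ( E(u) M(u)^σ / (E(Q) M(Q)^σ) )^{1/2} ‖∇Q‖_{L²} ‖Q‖_{L²}^σ. -/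
open MeasureTheory Filter

noncomputable section

private lemma key_ineq (β γ σ t : ℝ) (hβ : 0 < β) (hγ : 4 < γ) (ht : 0 < t)
    (hσ : σ = β / (γ - 4))
    (a mu P aQ mQ PQ C : ℝ)
    (ha : 0 ≤ a) (hmu : 0 ≤ mu) (hP : 0 ≤ P) (haQ : 0 ≤ aQ) (hmQ : 0 < mQ)
    (hC : C = PQ / (mQ ^ (β/4) * aQ ^ (γ/2)))
    (hGNu : P ≤ C * mu ^ (β/4) * a ^ (γ/2))
    (hPo1 : mQ = (β/γ) * aQ^2)
    (hPo2 : mQ = (β/(2*t)) * PQ)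
    (hle : a * mu ^ (σ/2) ≤ aQ * mQ ^ (σ/2)) :
    a * mu ^ (σ/2) ≤
      ((1/2*a^2 - 1/t*P) * mu ^ σ / ((1/2*aQ^2 - 1/t*PQ) * mQ ^ σ)) ^ ((1:ℝ)/2)
        * (aQ * mQ ^ (σ/2)) := by
  have hγ0 : (0:ℝ) < γ := by linarith
  have hγ4 : γ - 4 ≠ 0 := by intro h; linarith
  have hσpos : 0 < σ := by rw [hσ]; exact div_pos hβ (by linarith)
  have hσγ : σ * γ = β + 4 * σ := by
    rw [hσ]; field_simp; ring
  have haQ2 : aQ ^ 2 = γ / β * mQ := by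
    rw [hPo1]; field_simp
  have haQpos : 0 < aQ := by
    have h1 : 0 < aQ ^ 2 := by rw [haQ2]; exact mul_pos (div_pos hγ0 hβ) hmQ
    rcases haQ.lt_or_eq with h | h
    · exact h
    · exfalso; rw [← h] at h1; simp at h1
  have hPQ : PQ = 2 * t / β * mQ := by
    rw [hPo2]; field_simp
  have hPQpos : 0 < PQ := by rw [hPQ]; positivity
  have hCpos : 0 < C := by
    rw [hC]
    have h1 : 0 < mQ ^ (β/4) := Real.rpow_pos_of_pos hmQ _
    have h2 : 0 < aQ ^ (γ/2) := Real.rpow_pos_of_pos haQpos _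
    positivity
  set y := a * mu ^ (σ/2) with hy
  set K := aQ * mQ ^ (σ/2) with hK
  have hy0 : 0 ≤ y := mul_nonneg ha (Real.rpow_nonneg hmu _)
  have hK0 : 0 < K := mul_pos haQpos (Real.rpow_pos_of_pos hmQ _)
  have hsq : ∀ x : ℝ, 0 ≤ x → (x ^ (σ/2)) ^ 2 = x ^ σ := by
    intro x hx
    rw [← Real.rpow_natCast (x ^ (σ/2)) 2, ← Real.rpow_mul hx]
    norm_num
  have hy2 : y ^ 2 = a ^ 2 * mu ^ σ := by
    rw [hy, mul_pow, hsq mu hmu]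
  have hK2 : K ^ 2 = aQ ^ 2 * mQ ^ σ := by
    rw [hK, mul_pow, hsq mQ hmQ.le]
  have hghalf : ∀ x m : ℝ, 0 ≤ x → 0 ≤ m →
      (x * m ^ (σ/2)) ^ (γ/2) = x ^ (γ/2) * m ^ (σ * γ / 4) := by
    intro x m hx hm
    rw [Real.mul_rpow hx (Real.rpow_nonneg hm _), ← Real.rpow_mul hm,
      show σ/2*(γ/2) = σ*γ/4 from by ring]
  have hyg : y ^ (γ/2) = a ^ (γ/2) * mu ^ (σ * γ / 4) := by
    rw [hy]; exact hghalf a mu ha hmu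
  have hmQβ : (0:ℝ) < mQ ^ (β/4) := Real.rpow_pos_of_pos hmQ _
  have haQγ : (0:ℝ) < aQ ^ (γ/2) := Real.rpow_pos_of_pos haQpos _
  have hCK : C * K ^ (γ/2) = PQ * mQ ^ σ := by
    have hKg : K ^ (γ/2) = aQ ^ (γ/2) * mQ ^ (σ*γ/4) := by
      rw [hK]; exact hghalf aQ mQ haQ hmQ.le
    have h1 : mQ ^ (σ*γ/4) = mQ ^ σ * mQ ^ (β/4) := by
      rw [← Real.rpow_add hmQ]; congr 1; linarith [hσγ]
    rw [hKg, h1, hC]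
    field_simp
  have hEQ : (1/2*aQ^2 - 1/t*PQ) * mQ ^ σ = 1/2 * K^2 - C/t * K ^ (γ/2) := by
    rw [hK2]
    have h2 : C/t * K ^ (γ/2) = 1/t * PQ * mQ ^ σ := by
      rw [div_mul_eq_mul_div, hCK]; ring
    rw [h2]; ring
  have hEQval : 1/2*aQ^2 - 1/t*PQ = (γ - 4) / (2*β) * mQ := by
    rw [haQ2, hPQ]; field_simp; ring
  have hEQpos : 0 < (1/2*aQ^2 - 1/t*PQ) * mQ ^ σ := by
    rw [hEQval]
    exact mul_pos (mul_pos (div_pos (by linarith) (by linarith)) hmQ)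
      (Real.rpow_pos_of_pos hmQ _)
  have hmuσ : 0 ≤ mu ^ σ := Real.rpow_nonneg hmu _
  have hu1 : 1/2 * y^2 - C/t * y ^ (γ/2) ≤ (1/2*a^2 - 1/t*P) * mu ^ σ := by
    have h3 : mu ^ (σ*γ/4) = mu ^ (β/4) * mu ^ σ := by
      rw [← Real.rpow_add' hmu (by positivity : β/4 + σ ≠ 0)]
      congr 1; linarith [hσγ]
    have h4 : P * mu ^ σ ≤ C * mu ^ (β/4) * a ^ (γ/2) * mu ^ σ :=
      mul_le_mul_of_nonneg_right hGNu hmuσ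
    have h5 := mul_le_mul_of_nonneg_left h4 (by positivity : (0:ℝ) ≤ 1/t)
    rw [hy2, hyg, h3]
    have h6 : (1/2*a^2 - 1/t*P) * mu ^ σ
        - (1/2 * (a^2 * mu^σ) - C/t * (a^(γ/2) * (mu^(β/4) * mu^σ)))
        = 1/t * (C * mu^(β/4) * a^(γ/2) * mu^σ) - 1/t * (P * mu^σ) := by ring
    linarith [h5, h6]
  have hsplit : ∀ x : ℝ, 0 ≤ x → x ^ (γ/2) = x ^ (γ/2 - 2) * x^2 := by
    intro x hx
    have hne : γ/2 - 2 + 2 ≠ 0 := by intro h; linarith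
    have h1 := Real.rpow_add' hx hne
    rw [show γ/2-2+2 = γ/2 from by ring] at h1
    have h22 : x ^ (2:ℝ) = x ^ (2:ℕ) := by
      rw [← Real.rpow_natCast x 2]; norm_num
    rw [h1, h22]
  have hyK : y ^ (γ/2-2) ≤ K ^ (γ/2-2) := Real.rpow_le_rpow hy0 hle (by linarith)
  have hmono : ((1/2*aQ^2 - 1/t*PQ) * mQ ^ σ) * y^2
      ≤ (1/2 * y^2 - C/t * y ^ (γ/2)) * K^2 := by
    rw [hEQ, hsplit y hy0, hsplit K hK0.le]
    have h6 : 0 ≤ C/t * (y^2 * K^2) * (K ^ (γ/2-2) - y ^ (γ/2-2)) := by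
      have h8 : 0 ≤ K ^ (γ/2-2) - y ^ (γ/2-2) := by linarith
      have h7 : 0 ≤ C/t := by positivity
      positivity
    have h9 : (1/2 * y^2 - C/t * (y ^ (γ/2-2) * y^2)) * K^2
        - (1/2 * K^2 - C/t * (K ^ (γ/2-2) * K^2)) * y^2
        = C/t * (y^2 * K^2) * (K ^ (γ/2-2) - y ^ (γ/2-2)) := by ring
    linarith [h6, h9]
  have hchain : ((1/2*aQ^2 - 1/t*PQ) * mQ ^ σ) * y^2
      ≤ ((1/2*a^2 - 1/t*P) * mu ^ σ) * K^2 :=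
    hmono.trans (mul_le_mul_of_nonneg_right hu1 (sq_nonneg K))
  set EQm := (1/2*aQ^2 - 1/t*PQ) * mQ ^ σ with hEQm
  set Eum := (1/2*a^2 - 1/t*P) * mu ^ σ with hEum
  have hEum0 : 0 ≤ Eum := by
    have h10 : 0 ≤ Eum * K^2 := le_trans (mul_nonneg hEQpos.le (sq_nonneg y)) hchain
    have h11 : (0:ℝ) * K^2 ≤ Eum * K^2 := by rw [zero_mul]; exact h10
    exact le_of_mul_le_mul_right h11 (pow_pos hK0 2)
  have hfin : y^2 ≤ (Eum / EQm) * K^2 := by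
    rw [div_mul_eq_mul_div, le_div_iff₀ hEQpos]
    linarith [hchain]
  have hr0 : 0 ≤ Eum / EQm := div_nonneg hEum0 hEQpos.le
  calc y = Real.sqrt (y ^ 2) := (Real.sqrt_sq hy0).symm
    _ ≤ Real.sqrt ((Eum / EQm) * K ^ 2) := Real.sqrt_le_sqrt hfin
    _ = (Eum / EQm) ^ ((1:ℝ)/2) * K := by
        rw [Real.sqrt_mul hr0, Real.sqrt_sq hK0.le, Real.sqrt_eq_rpow]

theorem gradient_controlled_by_energy
    (N : ℕ) (hN : 1 ≤ N) (α : ℝ) (hα₁ : 4 / (N : ℝ) < α)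
    (hα₂ : 3 ≤ N → α < 4 / ((N : ℝ) - 2))
    (σ : ℝ) (hσ : σ = (4 - ((N : ℝ) - 2) * α) / ((N : ℝ) * α - 4))
    (Q : Rn N → ℂ) (hQH1 : InH1 N α Q) (hQpos : 0 < massM N Q)
    (CGN : ℝ)
    (hCGN : CGN = lpnorm N (α + 2) Q ^ (α + 2) /
      (l2norm N Q ^ ((4 - ((N : ℝ) - 2) * α) / 2) * gradL2 N Q ^ ((N : ℝ) * α / 2)))
    (hGN : ∀ f : Rn N → ℂ, InH1 N α f →
      lpnorm N (α + 2) f ^ (α + 2) ≤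
        CGN * l2norm N f ^ ((4 - ((N : ℝ) - 2) * α) / 2) * gradL2 N f ^ ((N : ℝ) * α / 2))
    (hPoho₁ : massM N Q = ((4 - ((N : ℝ) - 2) * α) / ((N : ℝ) * α)) * gradL2 N Q ^ 2)
    (hPoho₂ : massM N Q =
      ((4 - ((N : ℝ) - 2) * α) / (2 * (α + 2))) * lpnorm N (α + 2) Q ^ (α + 2))
    (u : Rn N → ℂ) (hu : InH1 N α u)
    (hle : gradL2 N u * l2norm N u ^ σ ≤ gradL2 N Q * l2norm N Q ^ σ) :
    gradL2 N u * l2norm N u ^ σ ≤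
      (energyE N α u * massM N u ^ σ / (energyE N α Q * massM N Q ^ σ)) ^ ((1 : ℝ) / 2) *
        (gradL2 N Q * l2norm N Q ^ σ) := by
  have hNpos : (0:ℝ) < N := by exact_mod_cast hN
  have hα0 : 0 < α := lt_trans (by positivity) hα₁
  have hγ4 : 4 < (N:ℝ) * α := by
    have h := (div_lt_iff₀ hNpos).mp hα₁
    nlinarith
  have hβ : 0 < 4 - ((N:ℝ) - 2) * α := by
    rcases le_or_gt ((N:ℝ)) 2 with h | h
    · nlinarith
    · have h3 : 3 ≤ N := by
        have : 2 < N := by exact_mod_cast h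
        omega
      have h4 := hα₂ h3
      rw [lt_div_iff₀ (by linarith)] at h4
      nlinarith
  have ht : (0:ℝ) < α + 2 := by linarith
  have hIu0 : 0 ≤ ∫ x, gradNormSq N u x :=
    integral_nonneg fun x => by unfold gradNormSq; positivity
  have hIQ0 : 0 ≤ ∫ x, gradNormSq N Q x :=
    integral_nonneg fun x => by unfold gradNormSq; positivity
  have hmu0 : 0 ≤ massM N u := integral_nonneg fun x => by positivity
  have hPu0 : 0 ≤ ∫ x, ‖u x‖ ^ (α+2) :=
    integral_nonneg fun x => Real.rpow_nonneg (norm_nonneg _) _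
  have hPQ0 : 0 ≤ ∫ x, ‖Q x‖ ^ (α+2) :=
    integral_nonneg fun x => Real.rpow_nonneg (norm_nonneg _) _
  have hlp : ∀ f : Rn N → ℂ, 0 ≤ (∫ x, ‖f x‖ ^ (α+2)) →
      lpnorm N (α+2) f ^ (α+2) = ∫ x, ‖f x‖ ^ (α+2) := by
    intro f hf
    unfold lpnorm
    rw [← Real.rpow_mul hf, one_div, inv_mul_cancel₀ (ne_of_gt ht), Real.rpow_one]
  have hl2 : ∀ f : Rn N → ℂ, 0 ≤ massM N f → ∀ e : ℝ,
      l2norm N f ^ e = massM N f ^ (e/2) := by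
    intro f hf e
    unfold l2norm
    rw [Real.sqrt_eq_rpow, ← Real.rpow_mul hf]
    congr 1; ring
  have hEu : energyE N α u = 1/2 * gradL2 N u ^ 2 - 1/(α+2) * ∫ x, ‖u x‖ ^ (α+2) := by
    unfold energyE gradL2
    rw [Real.sq_sqrt hIu0]
  have hEQ : energyE N α Q = 1/2 * gradL2 N Q ^ 2 - 1/(α+2) * ∫ x, ‖Q x‖ ^ (α+2) := by
    unfold energyE gradL2
    rw [Real.sq_sqrt hIQ0]
  have hGNu := hGN u hu
  rw [hlp u hPu0, hl2 u hmu0] at hGNu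
  rw [show (4 - ((N:ℝ) - 2) * α) / 2 / 2 = (4 - ((N:ℝ) - 2) * α) / 4 from by ring] at hGNu
  rw [hlp Q hPQ0, hl2 Q hQpos.le] at hCGN
  rw [show (4 - ((N:ℝ) - 2) * α) / 2 / 2 = (4 - ((N:ℝ) - 2) * α) / 4 from by ring] at hCGN
  rw [hlp Q hPQ0] at hPoho₂
  rw [hl2 u hmu0, hl2 Q hQpos.le] at hle ⊢
  rw [hEu, hEQ]
  exact key_ineq (4 - ((N:ℝ) - 2) * α) ((N:ℝ) * α) σ (α+2) hβ hγ4 ht hσ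
    (gradL2 N u) (massM N u) (∫ x, ‖u x‖ ^ (α+2))
    (gradL2 N Q) (massM N Q) (∫ x, ‖Q x‖ ^ (α+2)) CGN
    (Real.sqrt_nonneg _) hmu0 hPu0 (Real.sqrt_nonneg _) hQpos
    hCGN hGNu hPoho₁ hPoho₂ hle
end
end

section
/- If u ∈ H¹(ℝ^N;ℂ) satisfies ‖∇u‖_{L²} ‖u‖_{L²}^σ ≤ ‖∇Q‖_{L²} ‖Q‖_{L²}^σ, then 8‖∇u‖_{L²}² − (4Nα/(α+2)) ‖u‖_{L^{α+2}}^{α+2} ≥ 8 [ 1 − ( E(u) M(u)^σ / (E(Q) M(Q)^σ) )^{(Nα−4)/4} ] ‖∇u‖_{L²}². -/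
open MeasureTheory Filter

noncomputable section

-- auxiliary facts
lemma massM_nonneg (N : ℕ) (u : Rn N → ℂ) : 0 ≤ massM N u :=
  integral_nonneg fun x => by positivity

lemma gradInt_nonneg (N : ℕ) (u : Rn N → ℂ) : 0 ≤ ∫ x, gradNormSq N u x :=
  integral_nonneg fun x => Finset.sum_nonneg fun i _ => by positivity

lemma gradL2_sq (N : ℕ) (u : Rn N → ℂ) :
    gradL2 N u ^ 2 = ∫ x, gradNormSq N u x :=
  Real.sq_sqrt (gradInt_nonneg N u)

lemma lpInt_nonneg (N : ℕ) (p : ℝ) (u : Rn N → ℂ) : 0 ≤ ∫ x, ‖u x‖ ^ p :=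
  integral_nonneg fun x => Real.rpow_nonneg (norm_nonneg _) _

lemma lpnorm_rpow (N : ℕ) {p : ℝ} (hp : p ≠ 0) (u : Rn N → ℂ) :
    lpnorm N p u ^ p = ∫ x, ‖u x‖ ^ p := by
  rw [lpnorm, ← Real.rpow_mul (lpInt_nonneg N p u), one_div_mul_cancel hp,
    Real.rpow_one]

lemma l2norm_rpow (N : ℕ) (u : Rn N → ℂ) (s : ℝ) :
    l2norm N u ^ s = massM N u ^ (s/2) := by
  rw [l2norm, Real.sqrt_eq_rpow, ← Real.rpow_mul (massM_nonneg N u)]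
  congr 1; ring


lemma rpow_half_mul {x : ℝ} (hx : 0 ≤ x) {s : ℝ} (hs : s ≠ 0) :
    x ^ (s/2) * x ^ (s/2) = x ^ s := by
  rw [← Real.rpow_add' hx (by simpa using hs : s/2 + s/2 ≠ 0)]
  norm_num

set_option maxHeartbeats 1000000 in
lemma key_ineq_s2 (n β σ ap2 C a m p b mq pq Eu EQ : ℝ)
    (hn : 4 < n) (hβ : 0 < β) (hap2 : 0 < ap2) (hσβ : σ * (n - 4) = β)
    (ha : 0 ≤ a) (hm : 0 ≤ m)
    (hb : 0 ≤ b) (hmq : 0 < mq)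
    (hGN : p ≤ C * m ^ (β/4) * a ^ (n/2))
    (hC : C = pq / (mq ^ (β/4) * b ^ (n/2)))
    (hP1 : mq = (β/n) * b^2)
    (hP2 : mq = (β/(2*ap2)) * pq)
    (hEu : Eu = a^2/2 - p/ap2) (hEQ : EQ = b^2/2 - pq/ap2)
    (hle : a * m ^ (σ/2) ≤ b * mq ^ (σ/2)) :
    4*n/ap2 * p ≤ 8 * (Eu * m^σ / (EQ * mq^σ)) ^ ((n-4)/4) * a^2 := by
  have hn0 : (0:ℝ) < n := by linarith
  have hn4 : (0:ℝ) < n - 4 := by linarith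
  have he0 : (0:ℝ) ≤ (n-4)/4 := by positivity
  have hσ0 : σ ≠ 0 := by
    intro h; rw [h, zero_mul] at hσβ; linarith
  have hσe : σ * ((n-4)/4) = β/4 := by
    field_simp
    linarith [hσβ]
  have hb2 : b^2 = n*mq/β := by
    rw [hP1]; field_simp
  have hbpos : 0 < b := by
    rcases hb.lt_or_eq with h|h
    · exact h
    · exfalso; rw [← h] at hb2
      have : (0:ℝ) < n*mq/β := by positivity
      simp at hb2; linarith
  have hpq : pq = 2*ap2*mq/β := by
    rw [hP2]; field_simp
  have hpqpos : 0 < pq := by rw [hpq]; positivity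
  have hEQval : EQ = (n-4)/(2*β)*mq := by
    rw [hEQ, hb2, hpq]; field_simp; ring
  have hEQpos : 0 < EQ := by rw [hEQval]; positivity
  set K := a^2 * m^σ with hKdef
  set KQ := b^2 * mq^σ with hKQdef
  have hK0 : 0 ≤ K := by positivity
  have hKQ : 0 < KQ := by positivity
  have hKle : K ≤ KQ := by
    have h1 : 0 ≤ a * m^(σ/2) := by positivity
    have h2 := mul_le_mul hle hle h1 (le_trans h1 hle)
    calc K = (a*m^(σ/2))*(a*m^(σ/2)) := by
            rw [show (a*m^(σ/2))*(a*m^(σ/2)) = a^2*(m^(σ/2)*m^(σ/2)) from by ring,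
              rpow_half_mul hm hσ0]
      _ ≤ (b*mq^(σ/2))*(b*mq^(σ/2)) := h2
      _ = KQ := by
            rw [show (b*mq^(σ/2))*(b*mq^(σ/2)) = b^2*(mq^(σ/2)*mq^(σ/2)) from by ring,
              rpow_half_mul hmq.le hσ0]
  have hpowe : ∀ x y : ℝ, 0 ≤ x → 0 ≤ y →
      (x^2 * y^σ) ^ ((n-4)/4) = x^((n-4)/2) * y^(β/4) := by
    intro x y hx hy
    rw [Real.mul_rpow (by positivity) (by positivity),
      ← Real.rpow_natCast x 2, ← Real.rpow_mul hx, ← Real.rpow_mul hy, hσe,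
      show ((2:ℕ):ℝ) * ((n-4)/4) = (n-4)/2 from by push_cast; ring]
  have haddexp : ∀ x : ℝ, 0 ≤ x → x^2 * x^((n-4)/2) = x^(n/2) := by
    intro x hx
    rcases hx.lt_or_eq with h|h
    · rw [← Real.rpow_natCast x 2, ← Real.rpow_add h]
      congr 1; push_cast; ring
    · rw [← h, Real.zero_rpow (by positivity : (0:ℝ) < (n-4)/2).ne',
        Real.zero_rpow (by positivity : (0:ℝ) < n/2).ne']
      ring
  have hpK : C * m^(β/4) * a^(n/2) = C * a^2 * K^((n-4)/4) := by
    rw [hKdef, hpowe a m ha hm, ← haddexp a ha]; ring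
  have hGN' : p ≤ C * a^2 * K^((n-4)/4) := by rw [← hpK]; exact hGN
  set sQ := KQ ^ ((n-4)/4) with hsQdef
  have hsQ : 0 < sQ := Real.rpow_pos_of_pos hKQ _
  have hbq : (0:ℝ) < b^((n-4)/2) := Real.rpow_pos_of_pos hbpos _
  have hmq4 : (0:ℝ) < mq^(β/4) := Real.rpow_pos_of_pos hmq _
  have hsQval : sQ = b^((n-4)/2) * mq^(β/4) := by
    rw [hsQdef, hKQdef, hpowe b mq hb hmq.le]
  have hCsQ : C * sQ = 2*ap2/n := by
    have hCval : C = pq / (mq^(β/4) * (b^2 * b^((n-4)/2))) := by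
      rw [hC, haddexp b hb]
    rw [hCval, hsQval, hpq, hb2]
    field_simp
  have hCpos : 0 < C := by
    rw [hC]
    exact div_pos hpqpos (mul_pos hmq4 (Real.rpow_pos_of_pos hbpos _))
  have hKe_le : K^((n-4)/4) ≤ sQ := Real.rpow_le_rpow hK0 hKle he0
  have hEum : K * (n-4)/(2*n) ≤ Eu * m^σ := by
    have h1 : p * m^σ ≤ C * K * K^((n-4)/4) := by
      have h := mul_le_mul_of_nonneg_right hGN' (Real.rpow_nonneg hm σ)
      calc p * m^σ ≤ C*a^2*K^((n-4)/4) * m^σ := h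
        _ = C * K * K^((n-4)/4) := by rw [hKdef]; ring
    have h2 : C * K * K^((n-4)/4) ≤ C * K * sQ :=
      mul_le_mul_of_nonneg_left hKe_le (by positivity)
    have h3 : C * K * sQ = 2*ap2/n * K := by
      rw [show C*K*sQ = (C*sQ)*K from by ring, hCsQ]
    have h5 : p*m^σ ≤ 2*ap2/n*K := by linarith
    have h6 : (p*m^σ)/ap2 ≤ 2/n*K := by
      rw [div_le_iff₀ hap2]
      have : 2/n*K*ap2 = 2*ap2/n*K := by ring
      linarith
    have h4 : Eu * m^σ = K/2 - (p*m^σ)/ap2 := by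
      rw [hEu, hKdef]; ring
    have h7 : K*(n-4)/(2*n) = K/2 - 2/n*K := by field_simp; ring
    rw [h4, h7]; linarith
  have hEQm : EQ * mq^σ = KQ * (n-4)/(2*n) := by
    rw [hEQval, hKQdef, hb2]; field_simp
  have hEQmpos : 0 < EQ * mq^σ := mul_pos hEQpos (Real.rpow_pos_of_pos hmq σ)
  set R := Eu * m^σ / (EQ * mq^σ) with hRdef
  have hRKQ : K ≤ R * KQ := by
    have h7 : R * KQ = Eu*m^σ * (2*n)/(n-4) := by
      rw [hRdef, hEQm]; field_simp
    rw [h7, le_div_iff₀ hn4]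
    have h8 := hEum
    rw [div_le_iff₀ (by linarith : (0:ℝ) < 2*n)] at h8
    linarith
  have hR0 : 0 ≤ R := by
    by_contra h
    push_neg at h
    linarith [mul_neg_of_neg_of_pos h hKQ, hK0, hRKQ]
  have h1 : K^((n-4)/4) ≤ R^((n-4)/4) * sQ := by
    rw [hsQdef, show R^((n-4)/4)*KQ^((n-4)/4) = (R*KQ)^((n-4)/4) from
      (Real.mul_rpow hR0 hKQ.le).symm]
    exact Real.rpow_le_rpow hK0 hRKQ he0
  have hc0 : (0:ℝ) ≤ 4*n/ap2 := by positivity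
  calc 4*n/ap2 * p ≤ 4*n/ap2 * (C*a^2*K^((n-4)/4)) :=
        mul_le_mul_of_nonneg_left hGN' hc0
    _ ≤ 4*n/ap2 * (C*a^2*(R^((n-4)/4)*sQ)) := by
        apply mul_le_mul_of_nonneg_left _ hc0
        exact mul_le_mul_of_nonneg_left h1 (by positivity)
    _ = (4*n/ap2 * (C*sQ)) * (R^((n-4)/4) * a^2) := by ring
    _ = 8 * R^((n-4)/4) * a^2 := by
        rw [hCsQ]; field_simp; ring


theorem virial_quantity_lower_bound
    (N : ℕ) (hN : 1 ≤ N) (α : ℝ) (hα₁ : 4 / (N : ℝ) < α)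
    (hα₂ : 3 ≤ N → α < 4 / ((N : ℝ) - 2))
    (σ : ℝ) (hσ : σ = (4 - ((N : ℝ) - 2) * α) / ((N : ℝ) * α - 4))
    (Q : Rn N → ℂ) (hQH1 : InH1 N α Q) (hQpos : 0 < massM N Q)
    (CGN : ℝ)
    (hCGN : CGN = lpnorm N (α + 2) Q ^ (α + 2) /
      (l2norm N Q ^ ((4 - ((N : ℝ) - 2) * α) / 2) * gradL2 N Q ^ ((N : ℝ) * α / 2)))
    (hGN : ∀ f : Rn N → ℂ, InH1 N α f →
      lpnorm N (α + 2) f ^ (α + 2) ≤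
        CGN * l2norm N f ^ ((4 - ((N : ℝ) - 2) * α) / 2) * gradL2 N f ^ ((N : ℝ) * α / 2))
    (hPoho₁ : massM N Q = ((4 - ((N : ℝ) - 2) * α) / ((N : ℝ) * α)) * gradL2 N Q ^ 2)
    (hPoho₂ : massM N Q =
      ((4 - ((N : ℝ) - 2) * α) / (2 * (α + 2))) * lpnorm N (α + 2) Q ^ (α + 2))
    (u : Rn N → ℂ) (hu : InH1 N α u)
    (hle : gradL2 N u * l2norm N u ^ σ ≤ gradL2 N Q * l2norm N Q ^ σ) :
    8 * gradL2 N u ^ 2 - (4 * (N : ℝ) * α / (α + 2)) * lpnorm N (α + 2) u ^ (α + 2) ≥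
      8 * (1 - (energyE N α u * massM N u ^ σ / (energyE N α Q * massM N Q ^ σ)) ^
          (((N : ℝ) * α - 4) / 4)) * gradL2 N u ^ 2 := by
  have hNpos : (0:ℝ) < N := by exact_mod_cast Nat.pos_of_ne_zero (by omega)
  have hαpos : 0 < α := lt_trans (by positivity) hα₁
  have hap2 : (0:ℝ) < α + 2 := by linarith
  have hn : (4:ℝ) < (N:ℝ) * α := by
    rw [div_lt_iff₀ hNpos] at hα₁; nlinarith
  have hβ : (0:ℝ) < 4 - ((N:ℝ) - 2) * α := by
    rcases le_or_gt 3 N with h3 | h3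
    · have h2 : (0:ℝ) < (N:ℝ) - 2 := by
        have : (3:ℝ) ≤ (N:ℝ) := by exact_mod_cast h3
        linarith
      have h4 := hα₂ h3
      rw [lt_div_iff₀ h2] at h4; nlinarith
    · have h2 : (N:ℝ) ≤ 2 := by exact_mod_cast Nat.lt_succ_iff.mp h3
      nlinarith [mul_nonneg (by linarith : (0:ℝ) ≤ 2 - (N:ℝ)) hαpos.le]
  have hσβ : σ * ((N:ℝ) * α - 4) = 4 - ((N:ℝ) - 2) * α := by
    rw [hσ, div_mul_cancel₀ _ (by linarith : (N:ℝ)*α - 4 ≠ 0)]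
  -- abbreviations
  set a := gradL2 N u with hadef
  set b := gradL2 N Q with hbdef
  set m := massM N u with hmdef
  set mq := massM N Q with hmqdef
  have ha : 0 ≤ a := Real.sqrt_nonneg _
  have hb : 0 ≤ b := Real.sqrt_nonneg _
  have hm : 0 ≤ m := massM_nonneg N u
  -- energies
  have hEu : energyE N α u = a^2/2 - (∫ x, ‖u x‖ ^ (α+2))/(α+2) := by
    rw [energyE, ← gradL2_sq]; ring
  have hEQ : energyE N α Q = b^2/2 - (∫ x, ‖Q x‖ ^ (α+2))/(α+2) := by
    rw [energyE, ← gradL2_sq]; ring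
  -- GN inequality in integral form
  have hGNu := hGN u hu
  rw [lpnorm_rpow N hap2.ne' u, l2norm_rpow,
    show ((4 - ((N:ℝ) - 2) * α) / 2) / 2 = (4 - ((N:ℝ) - 2) * α) / 4 from by ring]
    at hGNu
  -- CGN in integral form
  rw [lpnorm_rpow N hap2.ne' Q, l2norm_rpow,
    show ((4 - ((N:ℝ) - 2) * α) / 2) / 2 = (4 - ((N:ℝ) - 2) * α) / 4 from by ring]
    at hCGN
  -- Pohozaev 2 in integral form
  rw [lpnorm_rpow N hap2.ne' Q] at hPoho₂
  -- hle in rpow form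
  rw [l2norm_rpow N u σ, l2norm_rpow N Q σ] at hle
  have hkey := key_ineq_s2 ((N:ℝ) * α) (4 - ((N:ℝ) - 2) * α) σ (α + 2) CGN a m
    (∫ x, ‖u x‖ ^ (α+2)) b mq (∫ x, ‖Q x‖ ^ (α+2))
    (energyE N α u) (energyE N α Q)
    hn hβ hap2 hσβ ha hm hb hQpos hGNu hCGN hPoho₁ hPoho₂ hEu hEQ hle
  rw [lpnorm_rpow N hap2.ne' u, ge_iff_le,
    show 8 * (1 - (energyE N α u * m ^ σ / (energyE N α Q * mq ^ σ)) ^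
        (((N:ℝ) * α - 4) / 4)) * a ^ 2
      = 8 * a ^ 2 - 8 * (energyE N α u * m ^ σ / (energyE N α Q * mq ^ σ)) ^
        (((N:ℝ) * α - 4) / 4) * a ^ 2 from by ring]
  have hc : 4 * (N:ℝ) * α / (α + 2) = 4 * ((N:ℝ) * α) / (α + 2) := by ring
  rw [hc]
  linarith [hkey]
end
end

section
/- For every 0 < ω < 1, the set K_ω = { u ∈ H¹(ℝ^N;ℂ) : E(u) M(u)^σ ≤ ω E(Q) M(Q)^σ and ‖∇u‖_{L²} ‖u‖_{L²}^σ < ‖∇Q‖_{L²} ‖Q‖_{L²}^σ } is a closed subset of H¹(ℝ^N) in the H¹-norm topology; moreover every u ∈ K_ω satisfies ‖∇u‖_{L²} ‖u‖_{L²}^σ ≤ ω^{1/2} ‖∇Q‖_{L²} ‖Q‖_{L²}^σ. -/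
open MeasureTheory Filter
open scoped ENNReal NNReal

noncomputable section

section Helpers

variable {X : Type*} [MeasurableSpace X] {μ : Measure X}
  {E : Type*} [NormedAddCommGroup E]

lemma rpow_add_le_two_rpow {a b p : ℝ} (ha : 0 ≤ a) (hb : 0 ≤ b) (hp : 0 ≤ p) :
    (a + b) ^ p ≤ 2 ^ p * (a ^ p + b ^ p) := by
  have h1 : a + b ≤ 2 * max a b := by
    rcases le_total a b with h | h
    · simp [max_eq_right h]; linarith
    · simp [max_eq_left h]; linarith
  have h2 : (a + b) ^ p ≤ (2 * max a b) ^ p :=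
    Real.rpow_le_rpow (by linarith) h1 hp
  have h3 : (2 * max a b) ^ p = 2 ^ p * (max a b) ^ p :=
    Real.mul_rpow (by norm_num) (le_max_of_le_left ha)
  have h4 : (max a b) ^ p ≤ a ^ p + b ^ p := by
    rcases le_total a b with h | h
    · rw [max_eq_right h]
      nlinarith [Real.rpow_nonneg ha p]
    · rw [max_eq_left h]
      nlinarith [Real.rpow_nonneg hb p]
  calc (a + b) ^ p ≤ 2 ^ p * (max a b) ^ p := by rw [← h3]; exact h2
    _ ≤ 2 ^ p * (a ^ p + b ^ p) := by
        have : (0:ℝ) ≤ 2 ^ p := Real.rpow_nonneg (by norm_num) p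
        nlinarith

lemma integrable_norm_rpow_sub {p : ℝ} (hp : 0 ≤ p) {f g : X → E}
    (hfm : AEStronglyMeasurable f μ) (hgm : AEStronglyMeasurable g μ)
    (hf : Integrable (fun x => ‖f x‖ ^ p) μ) (hg : Integrable (fun x => ‖g x‖ ^ p) μ) :
    Integrable (fun x => ‖f x - g x‖ ^ p) μ := by
  refine Integrable.mono' (((hf.add hg).const_mul (2 ^ p))) ?_ ?_
  · exact ((hfm.sub hgm).norm.aemeasurable.pow_const p).aestronglyMeasurable
  · filter_upwards with x
    have h0 : (0:ℝ) ≤ ‖f x - g x‖ ^ p := Real.rpow_nonneg (norm_nonneg _) p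
    rw [Real.norm_of_nonneg h0]
    calc ‖f x - g x‖ ^ p ≤ (‖f x‖ + ‖g x‖) ^ p :=
          Real.rpow_le_rpow (norm_nonneg _) (norm_sub_le _ _) hp
      _ ≤ 2 ^ p * (‖f x‖ ^ p + ‖g x‖ ^ p) :=
          rpow_add_le_two_rpow (norm_nonneg _) (norm_nonneg _) hp

lemma memLp_of_integrable_rpow {p : ℝ} (hp : 0 < p) {f : X → E}
    (hfm : AEStronglyMeasurable f μ) (hf : Integrable (fun x => ‖f x‖ ^ p) μ) :
    MemLp f (ENNReal.ofReal p) μ := by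
  have hP0 : ENNReal.ofReal p ≠ 0 := by simp [ENNReal.ofReal_eq_zero, not_le, hp]
  have hPt : ENNReal.ofReal p ≠ ∞ := ENNReal.ofReal_ne_top
  have h := memLp_norm_rpow_iff (p := ENNReal.ofReal p) (q := ENNReal.ofReal p) hfm hP0 hPt
  rw [ENNReal.div_self hP0 hPt, memLp_one_iff_integrable, ENNReal.toReal_ofReal hp.le] at h
  exact h.mp hf

lemma integral_rpow_norm_add_le {p : ℝ} (hp : 1 ≤ p) {f g : X → E}
    (hfm : AEStronglyMeasurable f μ) (hgm : AEStronglyMeasurable g μ)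
    (hf : Integrable (fun x => ‖f x‖ ^ p) μ) (hg : Integrable (fun x => ‖g x‖ ^ p) μ) :
    (∫ x, ‖f x + g x‖ ^ p ∂μ) ^ (1 / p) ≤
      (∫ x, ‖f x‖ ^ p ∂μ) ^ (1 / p) + (∫ x, ‖g x‖ ^ p ∂μ) ^ (1 / p) := by
  have hp0 : 0 < p := lt_of_lt_of_le one_pos hp
  have hP0 : ENNReal.ofReal p ≠ 0 := by simp [ENNReal.ofReal_eq_zero, not_le, hp0]
  have hPt : ENNReal.ofReal p ≠ ∞ := ENNReal.ofReal_ne_top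
  have hPr : (ENNReal.ofReal p).toReal = p := ENNReal.toReal_ofReal hp0.le
  have hfP := memLp_of_integrable_rpow hp0 hfm hf
  have hgP := memLp_of_integrable_rpow hp0 hgm hg
  have hfgP : MemLp (f + g) (ENNReal.ofReal p) μ := hfP.add hgP
  have hP1 : (1:ℝ≥0∞) ≤ ENNReal.ofReal p := by
    rw [← ENNReal.ofReal_one]; exact ENNReal.ofReal_le_ofReal hp
  have tri := eLpNorm_add_le hfm hgm hP1
  rw [hfgP.eLpNorm_eq_integral_rpow_norm hP0 hPt,
    hfP.eLpNorm_eq_integral_rpow_norm hP0 hPt,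
    hgP.eLpNorm_eq_integral_rpow_norm hP0 hPt, hPr] at tri
  have n1 : (0:ℝ) ≤ (∫ x, ‖f x‖ ^ p ∂μ) ^ p⁻¹ :=
    Real.rpow_nonneg (integral_nonneg fun x => Real.rpow_nonneg (norm_nonneg _) p) _
  have n2 : (0:ℝ) ≤ (∫ x, ‖g x‖ ^ p ∂μ) ^ p⁻¹ :=
    Real.rpow_nonneg (integral_nonneg fun x => Real.rpow_nonneg (norm_nonneg _) p) _
  rw [← ENNReal.ofReal_add n1 n2, ENNReal.ofReal_le_ofReal_iff (by linarith)] at tri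
  simpa [one_div, Pi.add_apply] using tri

lemma abs_integral_rpow_norm_sub_le {p : ℝ} (hp : 1 ≤ p) {f g : X → E}
    (hfm : AEStronglyMeasurable f μ) (hgm : AEStronglyMeasurable g μ)
    (hf : Integrable (fun x => ‖f x‖ ^ p) μ) (hg : Integrable (fun x => ‖g x‖ ^ p) μ) :
    |(∫ x, ‖f x‖ ^ p ∂μ) ^ (1 / p) - (∫ x, ‖g x‖ ^ p ∂μ) ^ (1 / p)| ≤
      (∫ x, ‖f x - g x‖ ^ p ∂μ) ^ (1 / p) := by
  have hp0 : (0:ℝ) < p := lt_of_lt_of_le one_pos hp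
  have hd : Integrable (fun x => ‖f x - g x‖ ^ p) μ :=
    integrable_norm_rpow_sub hp0.le hfm hgm hf hg
  have h1 : (∫ x, ‖f x‖ ^ p ∂μ) ^ (1 / p) ≤
      (∫ x, ‖f x - g x‖ ^ p ∂μ) ^ (1 / p) + (∫ x, ‖g x‖ ^ p ∂μ) ^ (1 / p) := by
    have := integral_rpow_norm_add_le hp (hfm.sub hgm) hgm hd hg
    simpa using this
  have h2 : (∫ x, ‖g x‖ ^ p ∂μ) ^ (1 / p) ≤
      (∫ x, ‖f x - g x‖ ^ p ∂μ) ^ (1 / p) + (∫ x, ‖f x‖ ^ p ∂μ) ^ (1 / p) := by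
    have := integral_rpow_norm_add_le hp (hgm.sub hfm) hfm
      (by simpa [norm_sub_rev] using hd) hf
    have e : (∫ x, ‖g x - f x‖ ^ p ∂μ) = ∫ x, ‖f x - g x‖ ^ p ∂μ := by
      congr 1; ext x; rw [norm_sub_rev]
    simpa [e] using this
  rw [abs_sub_le_iff]
  constructor <;> linarith

lemma tendsto_integral_rpow_norm {p : ℝ} (hp : 1 ≤ p) {v : ℕ → X → E} {u : X → E}
    (hvm : ∀ n, AEStronglyMeasurable (v n) μ) (hum : AEStronglyMeasurable u μ)
    (hv : ∀ n, Integrable (fun x => ‖v n x‖ ^ p) μ)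
    (hu : Integrable (fun x => ‖u x‖ ^ p) μ)
    (hconv : Tendsto (fun n => ∫ x, ‖v n x - u x‖ ^ p ∂μ) atTop (nhds 0)) :
    Tendsto (fun n => ∫ x, ‖v n x‖ ^ p ∂μ) atTop (nhds (∫ x, ‖u x‖ ^ p ∂μ)) := by
  have hp0 : (0:ℝ) < p := lt_of_lt_of_le one_pos hp
  set A : ℕ → ℝ := fun n => (∫ x, ‖v n x‖ ^ p ∂μ) ^ (1 / p) with hA
  set B : ℝ := (∫ x, ‖u x‖ ^ p ∂μ) ^ (1 / p) with hB
  have hE : Tendsto (fun n => (∫ x, ‖v n x - u x‖ ^ p ∂μ) ^ (1 / p)) atTop (nhds 0) := by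
    have := hconv.rpow_const (p := 1 / p) (Or.inr (by positivity))
    simpa [Real.zero_rpow (by positivity : (1:ℝ)/p ≠ 0), one_div,
      Real.zero_rpow (by positivity : p⁻¹ ≠ 0)] using this
  have habs : ∀ n, |A n - B| ≤ (∫ x, ‖v n x - u x‖ ^ p ∂μ) ^ (1 / p) := fun n =>
    abs_integral_rpow_norm_sub_le hp (hvm n) hum (hv n) hu
  have hAB : Tendsto A atTop (nhds B) := by
    rw [tendsto_iff_dist_tendsto_zero]
    exact squeeze_zero (fun n => dist_nonneg) (fun n => by
      rw [Real.dist_eq]; exact habs n) hE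
  have hfin : Tendsto (fun n => A n ^ p) atTop (nhds (B ^ p)) :=
    hAB.rpow_const (Or.inr hp0.le)
  have eA : ∀ n, A n ^ p = ∫ x, ‖v n x‖ ^ p ∂μ := fun n => by
    rw [hA, ← Real.rpow_mul (integral_nonneg fun x => Real.rpow_nonneg (norm_nonneg _) p),
      one_div, inv_mul_cancel₀ hp0.ne', Real.rpow_one]
  have eB : B ^ p = ∫ x, ‖u x‖ ^ p ∂μ := by
    rw [hB, ← Real.rpow_mul (integral_nonneg fun x => Real.rpow_nonneg (norm_nonneg _) p),
      one_div, inv_mul_cancel₀ hp0.ne', Real.rpow_one]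
  rw [← eB]
  exact hfin.congr fun n => eA n

end Helpers

lemma core_ineq {s ω yQ y : ℝ} (hs : 2 < s) (hω : 0 < ω) (hω1 : ω < 1)
    (hyQ : 0 < yQ) (hy : 0 ≤ y) (hlt : y < yQ)
    (h : y ^ 2 / 2 - y ^ s / (s * yQ ^ (s - 2)) ≤ ω * ((s - 2) / (2 * s) * yQ ^ 2)) :
    y ≤ Real.sqrt ω * yQ := by
  by_contra hcon
  push_neg at hcon
  have hs0 : (0:ℝ) < s := by linarith
  have hsw : 0 < Real.sqrt ω := Real.sqrt_pos.mpr hω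
  have hy0 : 0 < y := lt_trans (by positivity) hcon
  set t : ℝ := y / yQ with ht_def
  have ht0 : 0 < t := div_pos hy0 hyQ
  have ht1 : t < 1 := (div_lt_one hyQ).mpr hlt
  have htw : Real.sqrt ω < t := (lt_div_iff₀ hyQ).mpr hcon
  have hy_eq : y = t * yQ := (div_mul_cancel₀ y hyQ.ne').symm
  set φ : ℝ → ℝ := fun r => r ^ 2 / 2 - r ^ s / s with hφ
  have hmono : StrictMonoOn φ (Set.Icc (0:ℝ) 1) := by
    apply strictMonoOn_of_deriv_pos (convex_Icc 0 1)
    · apply ContinuousOn.sub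
      · exact (continuous_pow 2).continuousOn.div_const 2
      · intro r hr
        exact ((Real.continuousAt_rpow_const r s (Or.inr hs0.le)).continuousWithinAt).div_const s
    · intro r hr
      rw [interior_Icc] at hr
      have hr0 : 0 < r := hr.1
      have hr1 : r < 1 := hr.2
      have h1 : HasDerivAt (fun r : ℝ => r ^ 2 / 2) ((2 * r ^ 1) / 2) r :=
        (hasDerivAt_pow 2 r).div_const 2
      have h2 : HasDerivAt (fun r : ℝ => r ^ s / s) ((s * r ^ (s - 1)) / s) r :=
        (Real.hasDerivAt_rpow_const (Or.inl hr0.ne')).div_const s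
      have hd : deriv (fun r : ℝ => r ^ 2 / 2 - r ^ s / s) r = (2 * r ^ 1) / 2 - (s * r ^ (s - 1)) / s := (h1.sub h2).deriv
      rw [hφ, hd]
      have e1 : (2 * r ^ 1) / 2 = r := by ring
      have e2 : (s * r ^ (s - 1)) / s = r ^ (s - 1) := by
        field_simp
      rw [e1, e2, sub_pos]
      have e3 : r ^ (s - 1) = r ^ (s - 2) * r := by
        rw [show s - 1 = (s - 2) + 1 by ring, Real.rpow_add hr0, Real.rpow_one]
      rw [e3]
      have h4 : r ^ (s - 2) < 1 := Real.rpow_lt_one hr0.le hr1 (by linarith)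
      nlinarith
  set c : ℝ := ω * ((s - 2) / (2 * s)) with hc
  have hyQs : (0:ℝ) < yQ ^ (s - 2) := Real.rpow_pos_of_pos hyQ _
  have hφt : φ t ≤ c := by
    have e1 : y ^ 2 = t ^ 2 * yQ ^ 2 := by rw [hy_eq]; ring
    have e2 : y ^ s = t ^ s * (yQ ^ (s - 2) * yQ ^ 2) := by
      rw [hy_eq, Real.mul_rpow ht0.le hyQ.le]
      congr 1
      rw [← Real.rpow_natCast yQ 2, ← Real.rpow_add hyQ]
      norm_num
    have e3 : y ^ 2 / 2 - y ^ s / (s * yQ ^ (s - 2)) = yQ ^ 2 * φ t := by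
      rw [e1, e2, hφ]
      field_simp
    have e4 : ω * ((s - 2) / (2 * s) * yQ ^ 2) = yQ ^ 2 * c := by rw [hc]; ring
    rw [e3, e4] at h
    have hyQ2 : (0:ℝ) < yQ ^ 2 := by positivity
    exact le_of_mul_le_mul_left h hyQ2
  have hws : Real.sqrt ω ^ s = ω ^ (s / 2) := by
    rw [Real.sqrt_eq_rpow, ← Real.rpow_mul hω.le]
    ring_nf
  have hw2 : Real.sqrt ω ^ 2 = ω := Real.sq_sqrt hω.le
  have h5 : ω ^ (s / 2) ≤ ω := by
    nth_rewrite 2 [← Real.rpow_one ω]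
    exact Real.rpow_le_rpow_of_exponent_ge hω hω1.le (by linarith)
  have hcw : c ≤ φ (Real.sqrt ω) := by
    rw [hφ]
    simp only
    rw [hws, hw2, hc]
    have e5 : ω * ((s - 2) / (2 * s)) = ω / 2 - ω / s := by field_simp
    have e6 : ω ^ (s / 2) / s ≤ ω / s := div_le_div_of_nonneg_right h5 hs0.le
    linarith
  have hsw1 : Real.sqrt ω ≤ 1 := by
    rw [show (1:ℝ) = Real.sqrt 1 by simp]
    exact Real.sqrt_le_sqrt hω1.le
  have hmem1 : Real.sqrt ω ∈ Set.Icc (0:ℝ) 1 := ⟨Real.sqrt_nonneg _, hsw1⟩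
  have hmem2 : t ∈ Set.Icc (0:ℝ) 1 := ⟨ht0.le, ht1.le⟩
  have := hmono hmem1 hmem2 htw
  linarith

lemma gradNormSq_nonneg (N : ℕ) (u : Rn N → ℂ) (x : Rn N) : 0 ≤ gradNormSq N u x :=
  Finset.sum_nonneg fun i _ => sq_nonneg _

instance euclideanComplex.measurableSpace (N : ℕ) : MeasurableSpace (EuclideanSpace ℂ (Fin N)) :=
  inferInstance

instance euclideanComplex.borelSpace (N : ℕ) : BorelSpace (EuclideanSpace ℂ (Fin N)) :=
  inferInstance

/-- the "vector gradient" of `u` -/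
def gradV (N : ℕ) (u : Rn N → ℂ) (x : Rn N) : EuclideanSpace ℂ (Fin N) :=
  WithLp.toLp 2 (fun i => fderiv ℝ u x (EuclideanSpace.single i 1))

lemma gradV_norm_sq (N : ℕ) (u : Rn N → ℂ) (x : Rn N) :
    ‖gradV N u x‖ ^ (2:ℝ) = gradNormSq N u x := by
  rw [show ((2:ℝ)) = ((2:ℕ):ℝ) by norm_num, Real.rpow_natCast, EuclideanSpace.norm_eq,
    Real.sq_sqrt (Finset.sum_nonneg fun i _ => sq_nonneg _)]
  rfl

lemma gradV_measurable (N : ℕ) (u : Rn N → ℂ) :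
    AEStronglyMeasurable (gradV N u) (volume : Measure (Rn N)) := by
  apply Measurable.aestronglyMeasurable
  apply (WithLp.measurable_toLp 2 _).comp
  apply measurable_pi_lambda
  intro i
  exact measurable_fderiv_apply_const ℝ u _

set_option maxHeartbeats 2000000 in
theorem K_omega_closed_and_gradient_bound
    (N : ℕ) (hN : 1 ≤ N) (α : ℝ) (hα₁ : 4 / (N : ℝ) < α)
    (hα₂ : 3 ≤ N → α < 4 / ((N : ℝ) - 2))
    (σ : ℝ) (hσ : σ = (4 - ((N : ℝ) - 2) * α) / ((N : ℝ) * α - 4))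
    (Q : Rn N → ℂ) (hQH1 : InH1 N α Q) (hQpos : 0 < massM N Q)
    (CGN : ℝ)
    (hCGN : CGN = lpnorm N (α + 2) Q ^ (α + 2) /
      (l2norm N Q ^ ((4 - ((N : ℝ) - 2) * α) / 2) * gradL2 N Q ^ ((N : ℝ) * α / 2)))
    (hGN : ∀ f : Rn N → ℂ, InH1 N α f →
      lpnorm N (α + 2) f ^ (α + 2) ≤
        CGN * l2norm N f ^ ((4 - ((N : ℝ) - 2) * α) / 2) * gradL2 N f ^ ((N : ℝ) * α / 2))
    (hPoho₁ : massM N Q = ((4 - ((N : ℝ) - 2) * α) / ((N : ℝ) * α)) * gradL2 N Q ^ 2)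
    (hPoho₂ : massM N Q =
      ((4 - ((N : ℝ) - 2) * α) / (2 * (α + 2))) * lpnorm N (α + 2) Q ^ (α + 2))
    (ω : ℝ) (hω₀ : 0 < ω) (hω₁ : ω < 1)
    (K : Set (Rn N → ℂ))
    (hK : K = {u | InH1 N α u ∧
      energyE N α u * massM N u ^ σ ≤ ω * (energyE N α Q * massM N Q ^ σ) ∧
      gradL2 N u * l2norm N u ^ σ < gradL2 N Q * l2norm N Q ^ σ}) :
    -- `K` is (sequentially) closed in `H¹(ℝ^N)` for the `H¹`-norm topology
    (∀ (v : ℕ → Rn N → ℂ) (u : Rn N → ℂ), (∀ n, v n ∈ K) → InH1 N α u →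
      Tendsto (fun n => (∫ x, ‖v n x - u x‖ ^ 2) +
        ∫ x, gradNormSq N (fun y => v n y - u y) x) atTop (nhds 0) →
      u ∈ K) ∧
    -- every element of `K` satisfies the `ω^{1/2}` gradient bound
    (∀ u ∈ K, gradL2 N u * l2norm N u ^ σ ≤
      Real.sqrt ω * (gradL2 N Q * l2norm N Q ^ σ)) := by
  -- basic numeric facts
  have hN0 : (0:ℝ) < N := by exact_mod_cast Nat.lt_of_lt_of_le Nat.zero_lt_one hN
  have hα0 : 0 < α := lt_trans (by positivity) hα₁
  have hNα : 4 < (N:ℝ) * α := by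
    rw [div_lt_iff₀ hN0] at hα₁; linarith
  set s : ℝ := (N:ℝ) * α / 2 with hs_def
  set a : ℝ := (4 - ((N : ℝ) - 2) * α) / 2 with ha_def
  clear_value s a
  have hs2 : 2 < s := by rw [hs_def]; linarith
  have hs0 : 0 < s := by linarith
  have h4α : 0 < 4 - ((N:ℝ) - 2) * α := by
    rcases le_or_gt 3 N with h3 | h3
    · have h3' : (3:ℝ) ≤ (N:ℝ) := by exact_mod_cast h3
      have := hα₂ h3
      rw [lt_div_iff₀ (by linarith : (0:ℝ) < (N:ℝ) - 2)] at this
      linarith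
    · have h3' : (N:ℝ) ≤ 2 := by
        have : N ≤ 2 := by omega
        exact_mod_cast this
      nlinarith
  have ha0 : 0 < a := by rw [ha_def]; linarith
  have hden : (N:ℝ) * α - 4 ≠ 0 := by linarith
  have hσs : σ * (s - 2) = a := by
    rw [hσ, hs_def, ha_def]
    field_simp
    ring
  have hσ0 : 0 < σ := by
    rw [hσ]
    exact div_pos (by linarith) (by linarith)
  have hα2 : (0:ℝ) < α + 2 := by linarith
  -- square of (l2norm)^σ
  have sq_rpow : ∀ w : Rn N → ℂ, 0 < massM N w → (l2norm N w ^ σ) ^ 2 = massM N w ^ σ := by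
    intro w hm
    rw [l2norm, ← Real.rpow_natCast (Real.sqrt (massM N w) ^ σ) 2,
      ← Real.rpow_mul (Real.sqrt_nonneg _), Real.sqrt_eq_rpow, ← Real.rpow_mul hm.le]
    congr 1
    push_cast
    ring
  -- lpnorm to the power p is the integral
  have hlp : ∀ w : Rn N → ℂ, lpnorm N (α + 2) w ^ (α + 2) = ∫ x, ‖w x‖ ^ (α + 2) := by
    intro w
    rw [lpnorm, ← Real.rpow_mul
      (integral_nonneg fun x => Real.rpow_nonneg (norm_nonneg _) _),
      one_div, inv_mul_cancel₀ hα2.ne', Real.rpow_one]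
  -- Q quantities
  have hIQg : 0 ≤ ∫ x, gradNormSq N Q x := integral_nonneg (gradNormSq_nonneg N Q)
  have hGQ2 : gradL2 N Q ^ 2 = ∫ x, gradNormSq N Q x := Real.sq_sqrt hIQg
  have hcoef1 : (4 - ((N : ℝ) - 2) * α) / ((N : ℝ) * α) = a / s := by
    rw [ha_def, hs_def]
    field_simp
  have hGQval : gradL2 N Q ^ 2 = s / a * massM N Q := by
    rw [hcoef1] at hPoho₁
    field_simp at hPoho₁ ⊢
    linarith [hPoho₁]
  have hcoef2 : (4 - ((N : ℝ) - 2) * α) / (2 * (α + 2)) = a / (α + 2) := by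
    rw [ha_def]
    field_simp
  rw [hcoef2] at hPoho₂
  have hIPQlp : lpnorm N (α + 2) Q ^ (α + 2) = (α + 2) / a * massM N Q := by
    rw [hPoho₂]
    field_simp
  have hIPQ : (∫ x, ‖Q x‖ ^ (α + 2)) = (α + 2) / a * massM N Q := by
    rw [← hlp Q]; exact hIPQlp
  have hGQ0 : 0 ≤ gradL2 N Q := Real.sqrt_nonneg _
  have hGQpos : 0 < gradL2 N Q := by
    have h1 : 0 < gradL2 N Q ^ 2 := by
      rw [hGQval]; positivity
    nlinarith
  have hl2Qpos : 0 < l2norm N Q := Real.sqrt_pos.mpr hQpos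
  have hyQpos : 0 < gradL2 N Q * l2norm N Q ^ σ :=
    mul_pos hGQpos (Real.rpow_pos_of_pos hl2Qpos σ)
  set yQ : ℝ := gradL2 N Q * l2norm N Q ^ σ with hyQ_def
  -- energy of Q
  have hEQ : energyE N α Q = (s - 2) / (2 * a) * massM N Q := by
    rw [energyE, ← hGQ2, hGQval, hIPQ]
    field_simp
  have hyQ2 : yQ ^ 2 = s / a * (massM N Q * massM N Q ^ σ) := by
    rw [hyQ_def, mul_pow, sq_rpow Q hQpos, hGQval]
    ring
  have hEQy : energyE N α Q * massM N Q ^ σ = (s - 2) / (2 * s) * yQ ^ 2 := by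
    rw [hEQ, hyQ2]
    field_simp
  -- value of CGN
  have hyQs2 : yQ ^ (s - 2) = gradL2 N Q ^ (s - 2) * l2norm N Q ^ a := by
    rw [hyQ_def, Real.mul_rpow hGQpos.le (Real.rpow_nonneg hl2Qpos.le σ),
      ← Real.rpow_mul hl2Qpos.le, hσs]
  have hGQs : gradL2 N Q ^ s = gradL2 N Q ^ (s - 2) * gradL2 N Q ^ 2 := by
    rw [← Real.rpow_natCast (gradL2 N Q) 2, ← Real.rpow_add hGQpos]
    norm_num
  have hl2a : 0 < l2norm N Q ^ a := Real.rpow_pos_of_pos hl2Qpos a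
  have hGs2 : 0 < gradL2 N Q ^ (s - 2) := Real.rpow_pos_of_pos hGQpos _
  have alg : ∀ M L G : ℝ, 0 < M → 0 < L → 0 < G →
      ((α + 2) / a * M) / (L * (G * (s / a * M))) = (α + 2) / (s * (G * L)) := by
    intro M L G hM hL hG
    field_simp
  have hCval : CGN = (α + 2) / (s * yQ ^ (s - 2)) := by
    rw [hCGN, hIPQlp, hyQs2, hGQs, hGQval]
    exact alg _ _ _ hQpos hl2a hGs2
  have hyQs2pos : 0 < yQ ^ (s - 2) := Real.rpow_pos_of_pos hyQpos _
  -- the fundamental bound for elements of K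
  have bound : ∀ u ∈ K, gradL2 N u * l2norm N u ^ σ ≤ Real.sqrt ω * yQ := by
    intro u hu
    rw [hK] at hu
    obtain ⟨huH, hle, hltQ⟩ := hu
    have hMu0 : 0 ≤ massM N u := integral_nonneg fun x => sq_nonneg _
    rcases eq_or_lt_of_le hMu0 with hM0 | hMpos
    · have : l2norm N u = 0 := by rw [l2norm, ← hM0, Real.sqrt_zero]
      rw [this, Real.zero_rpow hσ0.ne', mul_zero]
      exact mul_nonneg (Real.sqrt_nonneg _) hyQpos.le
    have hl2u : 0 < l2norm N u := Real.sqrt_pos.mpr hMpos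
    have hIug : 0 ≤ ∫ x, gradNormSq N u x := integral_nonneg (gradNormSq_nonneg N u)
    have hGu0 : 0 ≤ gradL2 N u := Real.sqrt_nonneg _
    rcases eq_or_lt_of_le hGu0 with hG0 | hGpos
    · rw [← hG0, zero_mul]
      exact mul_nonneg (Real.sqrt_nonneg _) hyQpos.le
    set y : ℝ := gradL2 N u * l2norm N u ^ σ with hy_def
    have hy0 : 0 ≤ y := mul_nonneg hGpos.le (Real.rpow_nonneg hl2u.le σ)
    have hGu2 : gradL2 N u ^ 2 = ∫ x, gradNormSq N u x := Real.sq_sqrt hIug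
    have hy2 : y ^ 2 = gradL2 N u ^ 2 * massM N u ^ σ := by
      rw [hy_def, mul_pow, sq_rpow u hMpos]
    have e_yu : l2norm N u ^ a * gradL2 N u ^ s * massM N u ^ σ = y ^ s := by
      rw [hy_def, Real.mul_rpow hGpos.le (Real.rpow_nonneg hl2u.le σ),
        ← Real.rpow_mul hl2u.le]
      have hMσ : massM N u ^ σ = (l2norm N u ^ σ) ^ 2 := (sq_rpow u hMpos).symm
      rw [hMσ, ← Real.rpow_natCast (l2norm N u ^ σ) 2,
        ← Real.rpow_mul hl2u.le]
      rw [mul_comm (l2norm N u ^ a) (gradL2 N u ^ s), mul_assoc,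
        ← Real.rpow_add hl2u]
      congr 1
      congr 1
      push_cast
      linarith [hσs]
    -- lower bound on the energy
    have hGNu := hGN u huH
    have hIpu : (∫ x, ‖u x‖ ^ (α + 2)) = lpnorm N (α + 2) u ^ (α + 2) := (hlp u).symm
    have hMσpos : 0 < massM N u ^ σ := Real.rpow_pos_of_pos hMpos σ
    have h1 : y ^ 2 / 2 - y ^ s / (s * yQ ^ (s - 2)) ≤ energyE N α u * massM N u ^ σ := by
      rw [energyE, sub_mul, hIpu]
      have hA : 1 / 2 * (∫ x, gradNormSq N u x) * massM N u ^ σ = y ^ 2 / 2 := by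
        rw [hy2, hGu2]; ring
      have hB : 1 / (α + 2) * lpnorm N (α + 2) u ^ (α + 2) * massM N u ^ σ ≤
          y ^ s / (s * yQ ^ (s - 2)) := by
        have hup : lpnorm N (α + 2) u ^ (α + 2) * massM N u ^ σ ≤
            (CGN * l2norm N u ^ a * gradL2 N u ^ s) * massM N u ^ σ :=
          mul_le_mul_of_nonneg_right hGNu hMσpos.le
        have he : (CGN * l2norm N u ^ a * gradL2 N u ^ s) * massM N u ^ σ =
            (α + 2) * (y ^ s / (s * yQ ^ (s - 2))) := by
          rw [hCval, ← e_yu]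
          field_simp
        calc 1 / (α + 2) * lpnorm N (α + 2) u ^ (α + 2) * massM N u ^ σ
            = 1 / (α + 2) * (lpnorm N (α + 2) u ^ (α + 2) * massM N u ^ σ) := by ring
          _ ≤ 1 / (α + 2) * ((α + 2) * (y ^ s / (s * yQ ^ (s - 2)))) :=
              mul_le_mul_of_nonneg_left (hup.trans_eq he) (by positivity)
          _ = y ^ s / (s * yQ ^ (s - 2)) := by field_simp
      linarith
    have h4 : energyE N α u * massM N u ^ σ ≤ ω * ((s - 2) / (2 * s) * yQ ^ 2) := by
      calc energyE N α u * massM N u ^ σ ≤ ω * (energyE N α Q * massM N Q ^ σ) := hle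
        _ = ω * ((s - 2) / (2 * s) * yQ ^ 2) := by rw [hEQy]
    exact core_ineq hs2 hω₀ hω₁ hyQpos hy0 hltQ (h1.trans h4)
  refine ⟨?_, bound⟩
  -- sequential closedness
  intro v u hv huH1 hconv
  have hvH : ∀ n, InH1 N α (v n) := fun n => by
    have := hv n; rw [hK] at this; exact this.1
  have humeas : AEStronglyMeasurable u (volume : Measure (Rn N)) :=
    huH1.1.continuous.aestronglyMeasurable
  have hvmeas : ∀ n, AEStronglyMeasurable (v n) (volume : Measure (Rn N)) := fun n =>
    (hvH n).1.continuous.aestronglyMeasurable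
  have e2 : ∀ y : ℝ, y ^ (2:ℝ) = y ^ (2:ℕ) := fun y => by
    rw [show (2:ℝ) = ((2:ℕ):ℝ) by norm_num, Real.rpow_natCast]
  have hvi2 : ∀ n, Integrable (fun x => ‖v n x‖ ^ (2:ℝ)) := fun n =>
    ((hvH n).2.1).congr (Filter.Eventually.of_forall fun x => (e2 _).symm)
  have hui2 : Integrable (fun x => ‖u x‖ ^ (2:ℝ)) :=
    (huH1.2.1).congr (Filter.Eventually.of_forall fun x => (e2 _).symm)
  have hAnn : ∀ n, 0 ≤ ∫ x, ‖v n x - u x‖ ^ (2:ℕ) := fun n =>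
    integral_nonneg fun x => sq_nonneg _
  have hBnn : ∀ n, 0 ≤ ∫ x, gradNormSq N (fun y => v n y - u y) x := fun n =>
    integral_nonneg (gradNormSq_nonneg _ _)
  have hAconv : Tendsto (fun n => ∫ x, ‖v n x - u x‖ ^ (2:ℕ)) atTop (nhds 0) :=
    squeeze_zero hAnn (fun n => le_add_of_nonneg_right (hBnn n)) hconv
  have hBconv : Tendsto (fun n => ∫ x, gradNormSq N (fun y => v n y - u y) x)
      atTop (nhds 0) :=
    squeeze_zero hBnn (fun n => le_add_of_nonneg_left (hAnn n)) hconv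
  -- mass convergence
  have hmass : Tendsto (fun n => massM N (v n)) atTop (nhds (massM N u)) := by
    have h := tendsto_integral_rpow_norm (p := (2:ℝ)) (by norm_num) hvmeas humeas hvi2 hui2
      (by simp only [e2]; exact hAconv)
    simp only [e2] at h
    simpa only [massM] using h
  -- gradient convergence
  have hGint : ∀ w : Rn N → ℂ, Integrable (gradNormSq N w) →
      Integrable (fun x => ‖gradV N w x‖ ^ (2:ℝ)) := fun w hw =>
    hw.congr (Filter.Eventually.of_forall fun x => (gradV_norm_sq N w x).symm)
  have hgv : ∀ n, Integrable (fun x => ‖gradV N (v n) x‖ ^ (2:ℝ)) := fun n =>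
    hGint _ (hvH n).2.2.1
  have hgu : Integrable (fun x => ‖gradV N u x‖ ^ (2:ℝ)) := hGint u huH1.2.2.1
  have hsub : ∀ n x, gradV N (v n) x - gradV N u x = gradV N (fun y => v n y - u y) x := by
    intro n x
    apply WithLp.ofLp_injective
    funext i
    show gradV N (v n) x i - gradV N u x i = _
    simp only [gradV]
    rw [fderiv_fun_sub ((hvH n).1 x) (huH1.1 x)]
    rfl
  have hBconv' : Tendsto (fun n => ∫ x, ‖gradV N (v n) x - gradV N u x‖ ^ (2:ℝ))
      atTop (nhds 0) := by
    refine hBconv.congr fun n => ?_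
    refine integral_congr_ae (Filter.Eventually.of_forall fun x => ?_)
    beta_reduce
    rw [hsub n x, gradV_norm_sq]
  have hggrad := tendsto_integral_rpow_norm (p := (2:ℝ)) (by norm_num)
    (fun n => gradV_measurable N (v n)) (gradV_measurable N u) hgv hgu hBconv'
  simp only [gradV_norm_sq] at hggrad
  have hgrad : Tendsto (fun n => ∫ x, gradNormSq N (v n) x) atTop
      (nhds (∫ x, gradNormSq N u x)) := hggrad
  -- L^{α+2} convergence
  have hl2diff0 : Tendsto (fun n => l2norm N (fun x => v n x - u x)) atTop (nhds 0) := by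
    have h := (Real.continuous_sqrt.tendsto 0).comp hAconv
    rw [Real.sqrt_zero] at h
    exact h.congr fun n => by simp only [Function.comp, l2norm, massM]
  have hgdiff0 : Tendsto (fun n => gradL2 N (fun x => v n x - u x)) atTop (nhds 0) := by
    have h := (Real.continuous_sqrt.tendsto 0).comp hBconv
    rw [Real.sqrt_zero] at h
    exact h.congr fun n => by simp only [Function.comp, gradL2]
  have hdiffH1 : ∀ n, InH1 N α (fun x => v n x - u x) := by
    intro n
    refine ⟨(hvH n).1.sub huH1.1, ?_, ?_, ?_⟩
    · exact (integrable_norm_rpow_sub (by norm_num) (hvmeas n) humeas (hvi2 n) hui2).congr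
        (Filter.Eventually.of_forall fun x => e2 _)
    · have h := integrable_norm_rpow_sub (by norm_num : (0:ℝ) ≤ 2)
        (gradV_measurable N (v n)) (gradV_measurable N u) (hgv n) hgu
      refine h.congr (Filter.Eventually.of_forall fun x => ?_)
      beta_reduce
      rw [hsub n x, gradV_norm_sq]
    · exact integrable_norm_rpow_sub (by linarith : (0:ℝ) ≤ α + 2) (hvmeas n) humeas
        ((hvH n).2.2.2) huH1.2.2.2
  have hPdiff : Tendsto (fun n => ∫ x, ‖v n x - u x‖ ^ (α + 2)) atTop (nhds 0) := by
    have hg0 : Tendsto (fun n => CGN * l2norm N (fun x => v n x - u x) ^ a *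
        gradL2 N (fun x => v n x - u x) ^ s) atTop
        (nhds (CGN * (0:ℝ) ^ a * (0:ℝ) ^ s)) :=
      (((hl2diff0.rpow_const (Or.inr ha0.le)).const_mul CGN).mul
        (hgdiff0.rpow_const (Or.inr hs0.le)))
    rw [Real.zero_rpow ha0.ne', Real.zero_rpow hs0.ne'] at hg0
    simp only [mul_zero] at hg0
    refine squeeze_zero (fun n => integral_nonneg fun x =>
      Real.rpow_nonneg (norm_nonneg _) _) (fun n => ?_) hg0
    calc (∫ x, ‖v n x - u x‖ ^ (α + 2))
        = lpnorm N (α + 2) (fun x => v n x - u x) ^ (α + 2) := (hlp _).symm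
      _ ≤ CGN * l2norm N (fun x => v n x - u x) ^ a *
          gradL2 N (fun x => v n x - u x) ^ s := hGN _ (hdiffH1 n)
  have hP : Tendsto (fun n => ∫ x, ‖v n x‖ ^ (α + 2)) atTop
      (nhds (∫ x, ‖u x‖ ^ (α + 2))) :=
    tendsto_integral_rpow_norm (by linarith : (1:ℝ) ≤ α + 2) hvmeas humeas
      (fun n => (hvH n).2.2.2) huH1.2.2.2 hPdiff
  -- energy convergence
  have hE : Tendsto (fun n => energyE N α (v n)) atTop (nhds (energyE N α u)) := by
    simp only [energyE]
    exact (hgrad.const_mul (1/2)).sub (hP.const_mul (1/(α+2)))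
  have hEM : Tendsto (fun n => energyE N α (v n) * massM N (v n) ^ σ) atTop
      (nhds (energyE N α u * massM N u ^ σ)) :=
    hE.mul (hmass.rpow_const (Or.inr hσ0.le))
  have hle_lim : energyE N α u * massM N u ^ σ ≤ ω * (energyE N α Q * massM N Q ^ σ) :=
    le_of_tendsto hEM (Filter.Eventually.of_forall fun n => by
      have := hv n; rw [hK] at this; exact this.2.1)
  have hyconv : Tendsto (fun n => gradL2 N (v n) * l2norm N (v n) ^ σ) atTop
      (nhds (gradL2 N u * l2norm N u ^ σ)) := by
    have h1 : Tendsto (fun n => gradL2 N (v n)) atTop (nhds (gradL2 N u)) := by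
      have h := (Real.continuous_sqrt.tendsto _).comp hgrad
      exact h.congr fun n => by simp only [Function.comp, gradL2]
    have h2 : Tendsto (fun n => l2norm N (v n)) atTop (nhds (l2norm N u)) := by
      have h := (Real.continuous_sqrt.tendsto _).comp hmass
      exact h.congr fun n => by simp only [Function.comp, l2norm]
    exact h1.mul (h2.rpow_const (Or.inr hσ0.le))
  have hy_lim : gradL2 N u * l2norm N u ^ σ ≤ Real.sqrt ω * yQ :=
    le_of_tendsto hyconv (Filter.Eventually.of_forall fun n => bound (v n) (hv n))
  have hstrict : Real.sqrt ω * yQ < yQ := by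
    have hlt1 : Real.sqrt ω < 1 := by
      rw [show (1:ℝ) = Real.sqrt 1 by simp]
      exact Real.sqrt_lt_sqrt hω₀.le hω₁
    nlinarith [hyQpos]
  rw [hK]
  exact ⟨huH1, hle_lim, lt_of_le_of_lt hy_lim hstrict⟩
end
end

section
/- Let ν ≥ 1, 1 ≤ q < ∞, and let E be a relatively compact subset of L^q(ℝ^ν;ℂ) (in the L^q-norm topology). If (y_n¹)_{n≥1}, (y_n²)_{n≥1} ⊂ ℝ^ν satisfy |y_n¹ − y_n²| → ∞ as n → ∞, then sup_{u,v ∈ E} ∫_{ℝ^ν} |u(x − y_n¹)|^{q/2} |v(x − y_n²)|^{q/2} dx → 0 as n → ∞. -/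
open MeasureTheory Filter Metric Set
open scoped ENNReal NNReal

noncomputable section

theorem aux_tail_single {α : Type*} [MeasurableSpace α] {μ : Measure α}
    {q : ℝ} (hq : 0 < q) {f : α → ℂ} (hf : MemLp f (ENNReal.ofReal q) μ)
    {s : ℕ → Set α} (hs : ∀ n, MeasurableSet (s n)) (hmono : Antitone s)
    (hempty : ⋂ n, s n = ∅) {η : ℝ≥0∞} (hη : 0 < η) :
    ∃ N : ℕ, eLpNorm f (ENNReal.ofReal q) (μ.restrict (s N)) ≤ η := by
  by_cases hηt : η = ⊤
  · exact ⟨0, by simp [hηt]⟩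
  have hp0 : ENNReal.ofReal q ≠ 0 := (ENNReal.ofReal_pos.2 hq).ne'
  have hpt : ENNReal.ofReal q ≠ ⊤ := ENNReal.ofReal_ne_top
  have hkey : ∀ μ' : Measure α,
      eLpNorm f (ENNReal.ofReal q) μ' = (∫⁻ x, (‖f x‖₊ : ℝ≥0∞) ^ q ∂μ') ^ (1/q) := by
    intro μ'
    rw [eLpNorm_eq_lintegral_rpow_enorm_toReal hp0 hpt]; simp_rw [enorm_eq_nnnorm]; rw [ENNReal.toReal_ofReal hq.le]
  have hfin : ∫⁻ x, (‖f x‖₊ : ℝ≥0∞) ^ q ∂μ ≠ ∞ := by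
    intro h
    have h2 := hf.2
    rw [hkey μ, h, ENNReal.top_rpow_of_pos (by positivity)] at h2
    exact h2.ne rfl
  haveI := isFiniteMeasure_withDensity hfin
  have htend := tendsto_measure_iInter_atTop
    (μ := μ.withDensity fun x => (‖f x‖₊ : ℝ≥0∞) ^ q)
    (fun n => (hs n).nullMeasurableSet) hmono ⟨0, measure_ne_top _ _⟩
  rw [hempty, measure_empty] at htend
  have hpos : 0 < η ^ q := ENNReal.rpow_pos hη hηt
  obtain ⟨N, hN⟩ := (ENNReal.tendsto_atTop_zero.mp htend) (η ^ q) hpos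
  refine ⟨N, ?_⟩
  have h1 : (μ.withDensity fun x => (‖f x‖₊ : ℝ≥0∞) ^ q) (s N) ≤ η ^ q := hN N le_rfl
  rw [withDensity_apply _ (hs N)] at h1
  rw [hkey]
  calc (∫⁻ x, (‖f x‖₊ : ℝ≥0∞) ^ q ∂μ.restrict (s N)) ^ (1/q)
      ≤ (η ^ q) ^ (1/q) := ENNReal.rpow_le_rpow h1 (by positivity)
    _ = η := by rw [← ENNReal.rpow_mul, mul_one_div, div_self hq.ne', ENNReal.rpow_one]

theorem aux_tail_uniform {α : Type*} [NormedAddCommGroup α] [MeasurableSpace α]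
    [OpensMeasurableSpace α] {μ : Measure α} {q : ℝ} (hq : 0 < q)
    [Fact (1 ≤ ENNReal.ofReal q)]
    {E : Set (Lp ℂ (ENNReal.ofReal q) μ)} (hE : TotallyBounded E)
    {η : ℝ≥0∞} (hη : 0 < η) :
    ∃ R : ℝ, 0 < R ∧ ∀ u ∈ E, eLpNorm (⇑u) (ENNReal.ofReal q)
      (μ.restrict ((Metric.closedBall (0:α) R)ᶜ)) ≤ η := by
  by_cases hηt : η = ⊤
  · exact ⟨1, one_pos, fun u _ => by simp [hηt]⟩
  have hη2t : η / 2 ≠ ⊤ := by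
    simp [ENNReal.div_eq_top, hηt]
  have hη20 : 0 < η / 2 := ENNReal.div_pos hη.ne' ENNReal.ofNat_ne_top
  set ε₀ : ℝ := (η / 2).toReal with hε₀def
  have hε₀ : 0 < ε₀ := ENNReal.toReal_pos hη20.ne' hη2t
  obtain ⟨t, htfin, hcov⟩ := Metric.totallyBounded_iff.mp hE ε₀ hε₀
  have hsmeas : ∀ n : ℕ, MeasurableSet ((Metric.closedBall (0:α) (n:ℝ))ᶜ) :=
    fun n => measurableSet_closedBall.compl
  have hsmono : Antitone fun n : ℕ => (Metric.closedBall (0:α) (n:ℝ))ᶜ := by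
    intro n m h
    exact compl_subset_compl.2 (closedBall_subset_closedBall (by exact_mod_cast h))
  have hsempty : ⋂ n : ℕ, (Metric.closedBall (0:α) (n:ℝ))ᶜ = ∅ := by
    rw [eq_empty_iff_forall_notMem]
    intro x hx
    obtain ⟨n, hn⟩ := exists_nat_ge ‖x‖
    exact (mem_iInter.mp hx n) (by simpa [Metric.mem_closedBall, dist_eq_norm] using hn)
  have hsingle : ∀ w : Lp ℂ (ENNReal.ofReal q) μ, ∃ N : ℕ,
      eLpNorm (⇑w) (ENNReal.ofReal q)
        (μ.restrict ((Metric.closedBall (0:α) (N:ℝ))ᶜ)) ≤ η / 2 :=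
    fun w => aux_tail_single hq (Lp.memLp w) hsmeas hsmono hsempty hη20
  choose F hF using hsingle
  set T := htfin.toFinset with hTdef
  refine ⟨((T.sup F : ℕ) : ℝ) + 1, by positivity, ?_⟩
  intro u hu
  obtain ⟨w, hw, hdist⟩ := Set.mem_iUnion₂.mp (hcov hu)
  have hsub : (Metric.closedBall (0:α) (((T.sup F : ℕ) : ℝ) + 1))ᶜ
      ⊆ (Metric.closedBall (0:α) (F w : ℝ))ᶜ := by
    apply compl_subset_compl.2
    apply closedBall_subset_closedBall
    have : (F w : ℝ) ≤ ((T.sup F : ℕ) : ℝ) :=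
      Nat.cast_le.2 (Finset.le_sup (htfin.mem_toFinset.2 hw))
    linarith
  have hw_tail : eLpNorm (⇑w) (ENNReal.ofReal q)
      (μ.restrict ((Metric.closedBall (0:α) (((T.sup F : ℕ) : ℝ) + 1))ᶜ)) ≤ η / 2 :=
    le_trans (eLpNorm_mono_measure _ (Measure.restrict_mono hsub le_rfl)) (hF w)
  have hdiff : eLpNorm (⇑u - ⇑w) (ENNReal.ofReal q) μ ≤ η / 2 := by
    have h1 : eLpNorm (⇑u - ⇑w) (ENNReal.ofReal q) μ
        = ENNReal.ofReal (dist u w) := by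
      rw [Lp.dist_def, ENNReal.ofReal_toReal]
      rw [← eLpNorm_congr_ae (Lp.coeFn_sub u w)]
      exact Lp.eLpNorm_ne_top _
    rw [h1]
    calc ENNReal.ofReal (dist u w) ≤ ENNReal.ofReal ε₀ :=
          ENNReal.ofReal_le_ofReal (le_of_lt (by simpa [Metric.mem_ball] using hdist))
      _ = η / 2 := by rw [hε₀def, ENNReal.ofReal_toReal hη2t]
  calc eLpNorm (⇑u) (ENNReal.ofReal q)
        (μ.restrict ((Metric.closedBall (0:α) (((T.sup F : ℕ) : ℝ) + 1))ᶜ))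
      = eLpNorm ((⇑u - ⇑w) + ⇑w) (ENNReal.ofReal q)
        (μ.restrict ((Metric.closedBall (0:α) (((T.sup F : ℕ) : ℝ) + 1))ᶜ)) := by
        rw [sub_add_cancel]
    _ ≤ eLpNorm (⇑u - ⇑w) (ENNReal.ofReal q)
          (μ.restrict ((Metric.closedBall (0:α) (((T.sup F : ℕ) : ℝ) + 1))ᶜ))
        + eLpNorm (⇑w) (ENNReal.ofReal q)
          (μ.restrict ((Metric.closedBall (0:α) (((T.sup F : ℕ) : ℝ) + 1))ᶜ)) :=
        eLpNorm_add_le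
          (((Lp.aestronglyMeasurable u).sub (Lp.aestronglyMeasurable w)).restrict)
          ((Lp.aestronglyMeasurable w).restrict) Fact.out
    _ ≤ η / 2 + η / 2 :=
        add_le_add (le_trans (eLpNorm_mono_measure _ Measure.restrict_le_self) hdiff) hw_tail
    _ = η := ENNReal.add_halves η

theorem separated_translates_overlap_vanishes
    (ν : ℕ) (hν : 1 ≤ ν) (q : ℝ) (hq : 1 ≤ q)
    [Fact (1 ≤ ENNReal.ofReal q)]
    (E : Set (Lp ℂ (ENNReal.ofReal q)
      (volume : Measure (EuclideanSpace ℝ (Fin ν)))))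
    (hE : IsCompact (closure E))
    (y₁ y₂ : ℕ → EuclideanSpace ℝ (Fin ν))
    (hy : Tendsto (fun n => ‖y₁ n - y₂ n‖) atTop atTop) :
    Tendsto (fun n : ℕ => ⨆ u ∈ E, ⨆ v ∈ E,
        ∫ x : EuclideanSpace ℝ (Fin ν),
          ‖u (x - y₁ n)‖ ^ (q / 2) * ‖v (x - y₂ n)‖ ^ (q / 2))
      atTop (nhds 0) := by
  have hq0 : 0 < q := lt_of_lt_of_le one_pos hq
  have hp0 : ENNReal.ofReal q ≠ 0 := (ENNReal.ofReal_pos.2 hq0).ne'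
  have hpt : ENNReal.ofReal q ≠ ⊤ := ENNReal.ofReal_ne_top
  -- lintegral formula
  have hlin : ∀ (μ' : Measure (EuclideanSpace ℝ (Fin ν))) (f : EuclideanSpace ℝ (Fin ν) → ℂ),
      ∫⁻ x, (‖f x‖₊ : ℝ≥0∞) ^ q ∂μ' = (eLpNorm f (ENNReal.ofReal q) μ') ^ q := by
    intro μ' f
    rw [eLpNorm_eq_lintegral_rpow_enorm_toReal hp0 hpt]; simp_rw [enorm_eq_nnnorm]; rw [ENNReal.toReal_ofReal hq0.le,
      ← ENNReal.rpow_mul, one_div, inv_mul_cancel₀ hq0.ne', ENNReal.rpow_one]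
  -- global bound
  obtain ⟨M, hM⟩ := isBounded_iff_forall_norm_le.mp (hE.isBounded.subset subset_closure)
  set M' : ℝ≥0∞ := max ((ENNReal.ofReal M) ^ q) 1 with hM'def
  have hM'1 : 1 ≤ M' := le_max_right _ _
  have hM'top : M' ≠ ⊤ := by
    have h1 : (ENNReal.ofReal M) ^ q ≠ ⊤ :=
      ENNReal.rpow_ne_top_of_nonneg hq0.le ENNReal.ofReal_ne_top
    exact ne_top_of_le_ne_top (ENNReal.add_ne_top.2 ⟨h1, ENNReal.one_ne_top⟩)
      (max_le le_self_add le_add_self)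
  have hM'0 : M' ≠ 0 := (one_pos.trans_le hM'1).ne'
  have hglobal : ∀ u ∈ E, ∫⁻ y, (‖u y‖₊ : ℝ≥0∞) ^ q ∂volume ≤ M' := by
    intro u hu
    rw [hlin]
    have h1 : eLpNorm (⇑u) (ENNReal.ofReal q) volume ≤ ENNReal.ofReal M := by
      have h2 : eLpNorm (⇑u) (ENNReal.ofReal q) volume = ENNReal.ofReal ‖u‖ := by
        rw [Lp.norm_def, ENNReal.ofReal_toReal (Lp.eLpNorm_ne_top u)]
      rw [h2]; exact ENNReal.ofReal_le_ofReal (hM u hu)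
    exact le_trans (ENNReal.rpow_le_rpow h1 hq0.le) (le_max_left _ _)
  -- start of the epsilon argument
  rw [Metric.tendsto_atTop]
  intro ε hε
  have hhalf : (0:ℝ) ≤ ε / 2 := by linarith
  -- delta
  have hden0 : (2:ℝ≥0∞) * M' ≠ 0 := by simp [hM'0]
  have hdent : (2:ℝ≥0∞) * M' ≠ ⊤ := ENNReal.mul_ne_top ENNReal.ofNat_ne_top hM'top
  set c : ℝ≥0∞ := ENNReal.ofReal (ε/2) / (2 * M') with hcdef
  have hc0 : c ≠ 0 := by
    refine (ENNReal.div_pos ?_ hdent).ne'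
    exact (ENNReal.ofReal_pos.2 (by linarith)).ne'
  have hct : c ≠ ⊤ := (ENNReal.div_lt_top ENNReal.ofReal_ne_top hden0).ne
  set δ : ℝ≥0∞ := c ^ (2:ℝ) with hδdef
  have hδ0 : δ ≠ 0 := (ENNReal.rpow_pos (pos_iff_ne_zero.2 hc0) hct).ne'
  have hδt : δ ≠ ⊤ := ENNReal.rpow_ne_top_of_nonneg (by norm_num) hct
  -- uniform tail
  obtain ⟨R, hR0, htail⟩ := aux_tail_uniform (μ := (volume : Measure (EuclideanSpace ℝ (Fin ν)))) hq0
    (hE.totallyBounded.subset subset_closure)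
    (η := δ ^ (1/q)) (ENNReal.rpow_pos (pos_iff_ne_zero.2 hδ0) hδt)
  have htailint : ∀ u ∈ E,
      ∫⁻ y in (Metric.closedBall (0:EuclideanSpace ℝ (Fin ν)) R)ᶜ, (‖u y‖₊ : ℝ≥0∞) ^ q ∂volume ≤ δ := by
    intro u hu
    rw [hlin]
    calc (eLpNorm (⇑u) (ENNReal.ofReal q)
            ((volume : Measure (EuclideanSpace ℝ (Fin ν))).restrict ((Metric.closedBall (0:EuclideanSpace ℝ (Fin ν)) R)ᶜ))) ^ q
        ≤ (δ ^ (1/q)) ^ q := ENNReal.rpow_le_rpow (htail u hu) hq0.le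
      _ = δ := by
          rw [← ENNReal.rpow_mul, one_div, inv_mul_cancel₀ hq0.ne', ENNReal.rpow_one]
  -- the pair estimate
  have h22 : (2:ℝ).HolderConjugate 2 := ⟨by norm_num, by norm_num, by norm_num⟩
  have hpair : ∀ n : ℕ, 2 * R + 1 ≤ ‖y₁ n - y₂ n‖ → ∀ u ∈ E, ∀ v ∈ E,
      ∫⁻ x, (‖u (x - y₁ n)‖₊ : ℝ≥0∞) ^ (q/2) * (‖v (x - y₂ n)‖₊ : ℝ≥0∞) ^ (q/2) ∂volume
        ≤ 2 * δ ^ (1/2 : ℝ) * M' ^ (1/2 : ℝ) := by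
    intro n hab u hu v hv
    set a := y₁ n with hadef
    set b := y₂ n with hbdef
    have hτa : MeasurePreserving (fun x : EuclideanSpace ℝ (Fin ν) => x - a) volume volume :=
      measurePreserving_sub_right volume a
    have hτb : MeasurePreserving (fun x : EuclideanSpace ℝ (Fin ν) => x - b) volume volume :=
      measurePreserving_sub_right volume b
    have hea : MeasurableEmbedding (fun x : EuclideanSpace ℝ (Fin ν) => x - a) :=
      (MeasurableEquiv.subRight a).measurableEmbedding
    have heb : MeasurableEmbedding (fun x : EuclideanSpace ℝ (Fin ν) => x - b) :=
      (MeasurableEquiv.subRight b).measurableEmbedding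
    set f : EuclideanSpace ℝ (Fin ν) → ℝ≥0∞ := fun x => (‖u (x - a)‖₊ : ℝ≥0∞) ^ (q/2) with hfdef
    set g : EuclideanSpace ℝ (Fin ν) → ℝ≥0∞ := fun x => (‖v (x - b)‖₊ : ℝ≥0∞) ^ (q/2) with hgdef
    have hfmeas : AEMeasurable f volume :=
      (((Lp.aestronglyMeasurable u).comp_measurePreserving hτa).enorm).pow_const _
    have hgmeas : AEMeasurable g volume :=
      (((Lp.aestronglyMeasurable v).comp_measurePreserving hτb).enorm).pow_const _
    have hf2 : ∀ x, f x ^ (2:ℝ) = (‖u (x - a)‖₊ : ℝ≥0∞) ^ q := by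
      intro x
      rw [hfdef, ← ENNReal.rpow_mul, div_mul_cancel₀ q (two_ne_zero)]
    have hg2 : ∀ x, g x ^ (2:ℝ) = (‖v (x - b)‖₊ : ℝ≥0∞) ^ q := by
      intro x
      rw [hgdef, ← ENNReal.rpow_mul, div_mul_cancel₀ q (two_ne_zero)]
    set S : Set (EuclideanSpace ℝ (Fin ν)) := (fun x : EuclideanSpace ℝ (Fin ν) => x - a) ⁻¹' (Metric.closedBall (0:EuclideanSpace ℝ (Fin ν)) R) with hSdef
    have hS : MeasurableSet S := hea.measurable measurableSet_closedBall
    -- full-space integrals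
    have hfull_u : ∫⁻ x, (‖u (x - a)‖₊ : ℝ≥0∞) ^ q ∂volume ≤ M' := by
      rw [hτa.lintegral_comp_emb hea (fun y => (‖u y‖₊ : ℝ≥0∞) ^ q)]
      exact hglobal u hu
    have hfull_v : ∫⁻ x, (‖v (x - b)‖₊ : ℝ≥0∞) ^ q ∂volume ≤ M' := by
      rw [hτb.lintegral_comp_emb heb (fun y => (‖v y‖₊ : ℝ≥0∞) ^ q)]
      exact hglobal v hv
    -- tail integrals
    have hS_v : ∫⁻ x in S, (‖v (x - b)‖₊ : ℝ≥0∞) ^ q ∂volume ≤ δ := by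
      have hSb : S = (fun x : EuclideanSpace ℝ (Fin ν) => x - b) ⁻¹' (Metric.closedBall (a - b) R) := by
        ext x
        simp only [hSdef, Set.mem_preimage, Metric.mem_closedBall, dist_eq_norm,
          sub_zero, sub_sub_sub_cancel_right]
      rw [hSb, hτb.setLIntegral_comp_preimage_emb heb (fun y => (‖v y‖₊ : ℝ≥0∞) ^ q)]
      refine le_trans (lintegral_mono_set ?_) (htailint v hv)
      intro y hy
      simp only [Metric.mem_closedBall, dist_eq_norm, sub_zero] at hy
      simp only [Set.mem_compl_iff, Metric.mem_closedBall, dist_eq_norm, sub_zero, not_le]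
      have h2 : ‖a - b‖ ≤ ‖y - (a - b)‖ + ‖y‖ := by
        calc ‖a - b‖ = ‖(y - (a - b)) - y‖ := by rw [sub_sub_cancel_left, norm_neg]
          _ ≤ ‖y - (a - b)‖ + ‖y‖ := norm_sub_le _ _
      linarith
    have hSc_u : ∫⁻ x in Sᶜ, (‖u (x - a)‖₊ : ℝ≥0∞) ^ q ∂volume ≤ δ := by
      have hSc : Sᶜ = (fun x : EuclideanSpace ℝ (Fin ν) => x - a) ⁻¹' ((Metric.closedBall (0:EuclideanSpace ℝ (Fin ν)) R)ᶜ) := by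
        rw [hSdef, ← Set.preimage_compl]
      rw [hSc, hτa.setLIntegral_comp_preimage_emb hea (fun y => (‖u y‖₊ : ℝ≥0∞) ^ q)]
      exact htailint u hu
    -- Hölder on each piece
    have hold1 := ENNReal.lintegral_mul_le_Lp_mul_Lq ((volume : Measure (EuclideanSpace ℝ (Fin ν))).restrict S) h22
      hfmeas.restrict hgmeas.restrict
    have hold2 := ENNReal.lintegral_mul_le_Lp_mul_Lq ((volume : Measure (EuclideanSpace ℝ (Fin ν))).restrict Sᶜ) h22
      hfmeas.restrict hgmeas.restrict
    simp only [Pi.mul_apply] at hold1 hold2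
    have hbound1 : ∫⁻ x in S, f x * g x ∂volume ≤ M' ^ (1/2:ℝ) * δ ^ (1/2:ℝ) := by
      refine le_trans hold1 (mul_le_mul' ?_ ?_)
      · refine ENNReal.rpow_le_rpow ?_ (by norm_num)
        simp only [hf2]
        exact le_trans (lintegral_mono' Measure.restrict_le_self le_rfl) hfull_u
      · refine ENNReal.rpow_le_rpow ?_ (by norm_num)
        simp only [hg2]
        exact hS_v
    have hbound2 : ∫⁻ x in Sᶜ, f x * g x ∂volume ≤ δ ^ (1/2:ℝ) * M' ^ (1/2:ℝ) := by
      refine le_trans hold2 (mul_le_mul' ?_ ?_)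
      · refine ENNReal.rpow_le_rpow ?_ (by norm_num)
        simp only [hf2]
        exact hSc_u
      · refine ENNReal.rpow_le_rpow ?_ (by norm_num)
        simp only [hg2]
        exact le_trans (lintegral_mono' Measure.restrict_le_self le_rfl) hfull_v
    calc ∫⁻ x, f x * g x ∂volume
        = (∫⁻ x in S, f x * g x ∂volume) + ∫⁻ x in Sᶜ, f x * g x ∂volume :=
          (lintegral_add_compl _ hS).symm
      _ ≤ M' ^ (1/2:ℝ) * δ ^ (1/2:ℝ) + δ ^ (1/2:ℝ) * M' ^ (1/2:ℝ) :=
          add_le_add hbound1 hbound2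
      _ = 2 * δ ^ (1/2:ℝ) * M' ^ (1/2:ℝ) := by ring
  -- final numeric bound
  have hfinal : (2:ℝ≥0∞) * δ ^ (1/2:ℝ) * M' ^ (1/2:ℝ) ≤ ENNReal.ofReal (ε/2) := by
    have hδhalf : δ ^ (1/2:ℝ) = c := by
      rw [hδdef, ← ENNReal.rpow_mul, show (2:ℝ) * (1/2) = 1 by norm_num, ENNReal.rpow_one]
    have hM'half : M' ^ (1/2:ℝ) ≤ M' := by
      calc M' ^ (1/2:ℝ) ≤ M' ^ (1:ℝ) :=
            ENNReal.rpow_le_rpow_of_exponent_le hM'1 (by norm_num)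
        _ = M' := ENNReal.rpow_one _
    calc (2:ℝ≥0∞) * δ ^ (1/2:ℝ) * M' ^ (1/2:ℝ) ≤ 2 * c * M' := by
          rw [hδhalf]; exact mul_le_mul_right hM'half _
      _ = c * (2 * M') := by ring
      _ = ENNReal.ofReal (ε/2) := by
          rw [hcdef, ENNReal.div_mul_cancel hden0 hdent]
  -- eventuality
  obtain ⟨N, hN⟩ := eventually_atTop.mp (hy.eventually_ge_atTop (2 * R + 1))
  refine ⟨N, fun n hn => ?_⟩
  have hkey : ∀ u ∈ E, ∀ v ∈ E,
      ∫ x, ‖u (x - y₁ n)‖ ^ (q / 2) * ‖v (x - y₂ n)‖ ^ (q / 2) ∂volume ≤ ε / 2 := by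
    intro u hu v hv
    have hptwise : ∀ x : EuclideanSpace ℝ (Fin ν),
        ENNReal.ofReal ‖‖u (x - y₁ n)‖ ^ (q / 2) * ‖v (x - y₂ n)‖ ^ (q / 2)‖
          = (‖u (x - y₁ n)‖₊ : ℝ≥0∞) ^ (q/2) * (‖v (x - y₂ n)‖₊ : ℝ≥0∞) ^ (q/2) := by
      intro x
      rw [Real.norm_eq_abs, abs_of_nonneg (mul_nonneg (Real.rpow_nonneg (norm_nonneg _) _)
        (Real.rpow_nonneg (norm_nonneg _) _)),
        ENNReal.ofReal_mul (Real.rpow_nonneg (norm_nonneg _) _),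
        ← ENNReal.ofReal_rpow_of_nonneg (norm_nonneg _) (by positivity),
        ← ENNReal.ofReal_rpow_of_nonneg (norm_nonneg _) (by positivity),
        ofReal_norm, ofReal_norm, enorm_eq_nnnorm, enorm_eq_nnnorm]
    calc ∫ x, ‖u (x - y₁ n)‖ ^ (q / 2) * ‖v (x - y₂ n)‖ ^ (q / 2) ∂volume
        ≤ ‖∫ x, ‖u (x - y₁ n)‖ ^ (q / 2) * ‖v (x - y₂ n)‖ ^ (q / 2) ∂volume‖ :=
          le_abs_self _
      _ ≤ (∫⁻ x, ENNReal.ofReal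
            ‖‖u (x - y₁ n)‖ ^ (q / 2) * ‖v (x - y₂ n)‖ ^ (q / 2)‖ ∂volume).toReal :=
          norm_integral_le_lintegral_norm _
      _ = (∫⁻ x, (‖u (x - y₁ n)‖₊ : ℝ≥0∞) ^ (q/2)
            * (‖v (x - y₂ n)‖₊ : ℝ≥0∞) ^ (q/2) ∂volume).toReal := by
          rw [lintegral_congr hptwise]
      _ ≤ (ENNReal.ofReal (ε/2)).toReal := by
          refine ENNReal.toReal_mono ENNReal.ofReal_ne_top ?_
          exact le_trans (hpair n (hN n hn) u hu v hv) hfinal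
      _ = ε / 2 := ENNReal.toReal_ofReal hhalf
  have hnonneg : 0 ≤ ⨆ u ∈ E, ⨆ v ∈ E,
      ∫ x, ‖u (x - y₁ n)‖ ^ (q / 2) * ‖v (x - y₂ n)‖ ^ (q / 2) ∂volume :=
    Real.iSup_nonneg fun u => Real.iSup_nonneg fun _ => Real.iSup_nonneg fun v =>
      Real.iSup_nonneg fun _ => integral_nonneg fun x =>
        mul_nonneg (Real.rpow_nonneg (norm_nonneg _) _) (Real.rpow_nonneg (norm_nonneg _) _)
  rw [Real.dist_eq, sub_zero, abs_of_nonneg hnonneg]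
  refine lt_of_le_of_lt ?_ (half_lt_self hε)
  exact Real.iSup_le (fun u => Real.iSup_le (fun hu => Real.iSup_le (fun v =>
    Real.iSup_le (fun hv => hkey u hu v hv) hhalf) hhalf) hhalf) hhalf
end
end

section
/- For every real α > 0 and every integer ℓ ≥ 2 there exists a constant C_ℓ (depending only on α and ℓ) such that for all complex numbers z₁, …, z_ℓ: | |z₁ + ⋯ + z_ℓ|^α (z₁ + ⋯ + z_ℓ) − Σ_{j=1}^ℓ |z_j|^α z_j | ≤ C_ℓ Σ_{1 ≤ j ≠ k ≤ ℓ} |z_j|^α |z_k|. -/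
noncomputable section

open Finset

/-- Key rpow difference estimate. -/
private lemma aux_rpow_diff (α : ℝ) (hα : 0 < α) {s t : ℝ} (ht : 0 ≤ t) (hts : t ≤ s) :
    (s ^ α - t ^ α) * t ≤ max 1 α * (s ^ α * (s - t)) := by
  have hs : 0 ≤ s := ht.trans hts
  rcases eq_or_lt_of_le hs with h0 | hspos
  · have ht0 : t = 0 := le_antisymm (hts.trans h0.ge) ht
    simp [← h0, ht0]
  -- claim : s ^ α - t ^ α ≤ max 1 α * (s ^ (α - 1) * (s - t))
  have hsa : s ^ (α - 1) * s = s ^ α := by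
    rw [← Real.rpow_add_one (ne_of_gt hspos) (α - 1)]; congr 1; ring
  have claim : s ^ α - t ^ α ≤ max 1 α * (s ^ (α - 1) * (s - t)) := by
    rcases le_total α 1 with hα1 | hα1
    · -- α ≤ 1 case
      have h1 : t * s ^ (α - 1) ≤ t ^ α := by
        rcases eq_or_lt_of_le ht with h0' | htpos
        · simp [← h0', Real.zero_rpow (ne_of_gt hα)]
        · have : s ^ (α - 1) ≤ t ^ (α - 1) :=
            Real.rpow_le_rpow_of_nonpos htpos hts (by linarith)
          calc t * s ^ (α - 1) ≤ t * t ^ (α - 1) := by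
                exact mul_le_mul_of_nonneg_left this ht
            _ = t ^ α := by
                rw [mul_comm, ← Real.rpow_add_one (ne_of_gt htpos) (α - 1)]
                congr 1; ring
      have h2 : s ^ α - t ^ α ≤ s ^ (α - 1) * (s - t) := by
        have : s ^ α = s ^ (α - 1) * s := hsa.symm
        nlinarith [h1]
      calc s ^ α - t ^ α ≤ s ^ (α - 1) * (s - t) := h2
        _ ≤ max 1 α * (s ^ (α - 1) * (s - t)) := by
            have hnn : 0 ≤ s ^ (α - 1) * (s - t) :=
              mul_nonneg (Real.rpow_nonneg hs _) (by linarith)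
            nlinarith [le_max_left 1 α]
    · -- 1 ≤ α : Bernoulli
      have hb : 1 + α * (t / s - 1) ≤ (1 + (t / s - 1)) ^ α :=
        one_add_mul_self_le_rpow_one_add (by
          have : 0 ≤ t / s := div_nonneg ht hs
          linarith) hα1
      have hts' : (1 : ℝ) + (t / s - 1) = t / s := by ring
      rw [hts'] at hb
      have hdiv : (t / s) ^ α = t ^ α / s ^ α := Real.div_rpow ht hs α
      rw [hdiv] at hb
      have hsα : 0 < s ^ α := Real.rpow_pos_of_pos hspos _
      have hmul := mul_le_mul_of_nonneg_right hb (le_of_lt hsα)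
      rw [div_mul_cancel₀ _ (ne_of_gt hsα)] at hmul
      -- hmul : (1 + α * (t / s - 1)) * s ^ α ≤ t ^ α
      have hss : s ^ α / s = s ^ (α - 1) := by
        rw [eq_comm, ← hsa, mul_div_assoc, div_self (ne_of_gt hspos), mul_one]
      have key : s ^ α - t ^ α ≤ α * (s ^ (α - 1) * (s - t)) := by
        have haux : (t / s - 1) * s ^ α = s ^ (α - 1) * (t - s) := by
          rw [← hss]; field_simp
        have expand : (1 + α * (t / s - 1)) * s ^ α
            = s ^ α + α * (s ^ (α - 1) * (t - s)) := by
          rw [← haux]; ring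
        rw [expand] at hmul
        nlinarith
      calc s ^ α - t ^ α ≤ α * (s ^ (α - 1) * (s - t)) := key
        _ ≤ max 1 α * (s ^ (α - 1) * (s - t)) := by
            have hnn : 0 ≤ s ^ (α - 1) * (s - t) :=
              mul_nonneg (Real.rpow_nonneg hs _) (by linarith)
            exact mul_le_mul_of_nonneg_right (le_max_right 1 α) hnn
  calc (s ^ α - t ^ α) * t ≤ (max 1 α * (s ^ (α - 1) * (s - t))) * t :=
        mul_le_mul_of_nonneg_right claim ht
    _ ≤ (max 1 α * (s ^ (α - 1) * (s - t))) * s := by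
        have : 0 ≤ max 1 α * (s ^ (α - 1) * (s - t)) :=
          mul_nonneg (le_trans zero_le_one (le_max_left 1 α))
            (mul_nonneg (Real.rpow_nonneg hs _) (by linarith))
        exact mul_le_mul_of_nonneg_left hts this
    _ = max 1 α * (s ^ α * (s - t)) := by rw [← hsa]; ring

/-- Hölder type estimate for F z = ‖z‖^α z. -/
private lemma aux_F_diff (α : ℝ) (hα : 0 < α) (a b : ℂ) :
    ‖((‖a‖ ^ α : ℝ) : ℂ) * a - ((‖b‖ ^ α : ℝ) : ℂ) * b‖ ≤
      (1 + max 1 α) * (‖a‖ ^ α + ‖b‖ ^ α) * ‖a - b‖ := by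
  wlog h : ‖b‖ ≤ ‖a‖ generalizing a b
  · have := this b a (le_of_not_ge h)
    rw [norm_sub_rev b a] at this
    rw [norm_sub_rev, add_comm (‖a‖ ^ α)]
    exact this
  have key : ((‖a‖ ^ α : ℝ) : ℂ) * a - ((‖b‖ ^ α : ℝ) : ℂ) * b
      = ((‖a‖ ^ α : ℝ) : ℂ) * (a - b) + (((‖a‖ ^ α - ‖b‖ ^ α : ℝ)) : ℂ) * b := by
    push_cast; ring
  rw [key]
  have h1 : ‖((‖a‖ ^ α : ℝ) : ℂ) * (a - b)‖ = ‖a‖ ^ α * ‖a - b‖ := by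
    rw [norm_mul, Complex.norm_real, Real.norm_eq_abs,
      abs_of_nonneg (Real.rpow_nonneg (norm_nonneg a) α)]
  have hmono : ‖b‖ ^ α ≤ ‖a‖ ^ α := Real.rpow_le_rpow (norm_nonneg b) h (le_of_lt hα)
  have h2 : ‖(((‖a‖ ^ α - ‖b‖ ^ α : ℝ)) : ℂ) * b‖ = (‖a‖ ^ α - ‖b‖ ^ α) * ‖b‖ := by
    rw [norm_mul, Complex.norm_real, Real.norm_eq_abs, abs_of_nonneg (by linarith)]
  have h3 : (‖a‖ ^ α - ‖b‖ ^ α) * ‖b‖ ≤ max 1 α * (‖a‖ ^ α * (‖a‖ - ‖b‖)) :=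
    aux_rpow_diff α hα (norm_nonneg b) h
  have h4 : ‖a‖ - ‖b‖ ≤ ‖a - b‖ := by
    have := norm_sub_norm_le a b
    linarith [le_abs_self (‖a‖ - ‖b‖)]
  have h5 : ‖a‖ ^ α * (‖a‖ - ‖b‖) ≤ ‖a‖ ^ α * ‖a - b‖ :=
    mul_le_mul_of_nonneg_left h4 (Real.rpow_nonneg (norm_nonneg a) α)
  calc ‖((‖a‖ ^ α : ℝ) : ℂ) * (a - b) + (((‖a‖ ^ α - ‖b‖ ^ α : ℝ)) : ℂ) * b‖
      ≤ ‖((‖a‖ ^ α : ℝ) : ℂ) * (a - b)‖ + ‖(((‖a‖ ^ α - ‖b‖ ^ α : ℝ)) : ℂ) * b‖ :=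
        norm_add_le _ _
    _ ≤ ‖a‖ ^ α * ‖a - b‖ + max 1 α * (‖a‖ ^ α * ‖a - b‖) := by
        rw [h1, h2]
        have := h3.trans (by nlinarith [le_max_left 1 α, Real.rpow_nonneg (norm_nonneg a) α] :
          max 1 α * (‖a‖ ^ α * (‖a‖ - ‖b‖)) ≤ max 1 α * (‖a‖ ^ α * ‖a - b‖))
        linarith
    _ ≤ (1 + max 1 α) * (‖a‖ ^ α + ‖b‖ ^ α) * ‖a - b‖ := by
        have hbn : 0 ≤ ‖b‖ ^ α := Real.rpow_nonneg (norm_nonneg b) α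
        have han : 0 ≤ ‖a‖ ^ α := Real.rpow_nonneg (norm_nonneg a) α
        have hM : (1 : ℝ) ≤ max 1 α := le_max_left 1 α
        nlinarith [mul_nonneg (mul_nonneg (by linarith : (0:ℝ) ≤ 1 + max 1 α) hbn)
          (norm_nonneg (a - b))]

/-- The two-term splitting estimate with cross terms only. -/
private lemma aux_split_two (α : ℝ) (hα : 0 < α) (a b : ℂ) :
    ‖((‖a + b‖ ^ α : ℝ) : ℂ) * (a + b) - ((‖a‖ ^ α : ℝ) : ℂ) * a - ((‖b‖ ^ α : ℝ) : ℂ) * b‖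
      ≤ ((1 + max 1 α) * (2 ^ α + 1) + 1) * (‖a‖ ^ α * ‖b‖ + ‖b‖ ^ α * ‖a‖) := by
  wlog h : ‖b‖ ≤ ‖a‖ generalizing a b
  · have := this b a (le_of_not_ge h)
    calc ‖((‖a + b‖ ^ α : ℝ) : ℂ) * (a + b) - ((‖a‖ ^ α : ℝ) : ℂ) * a - ((‖b‖ ^ α : ℝ) : ℂ) * b‖
        = ‖((‖b + a‖ ^ α : ℝ) : ℂ) * (b + a) - ((‖b‖ ^ α : ℝ) : ℂ) * b - ((‖a‖ ^ α : ℝ) : ℂ) * a‖ := by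
          rw [add_comm a b]; congr 1; ring
      _ ≤ ((1 + max 1 α) * (2 ^ α + 1) + 1) * (‖b‖ ^ α * ‖a‖ + ‖a‖ ^ α * ‖b‖) := this
      _ = ((1 + max 1 α) * (2 ^ α + 1) + 1) * (‖a‖ ^ α * ‖b‖ + ‖b‖ ^ α * ‖a‖) := by ring
  have han : 0 ≤ ‖a‖ ^ α := Real.rpow_nonneg (norm_nonneg a) α
  have hbn : 0 ≤ ‖b‖ ^ α := Real.rpow_nonneg (norm_nonneg b) α
  have hM : (1 : ℝ) ≤ max 1 α := le_max_left 1 α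
  have h2a : (2:ℝ) ^ α * ‖a‖ ^ α = (2 * ‖a‖) ^ α :=
    (Real.mul_rpow (by norm_num) (norm_nonneg a)).symm
  have hab : ‖a + b‖ ^ α ≤ 2 ^ α * ‖a‖ ^ α := by
    rw [h2a]
    apply Real.rpow_le_rpow (norm_nonneg _) _ (le_of_lt hα)
    calc ‖a + b‖ ≤ ‖a‖ + ‖b‖ := norm_add_le a b
      _ ≤ 2 * ‖a‖ := by linarith
  have step1 : ‖((‖a + b‖ ^ α : ℝ) : ℂ) * (a + b) - ((‖a‖ ^ α : ℝ) : ℂ) * a‖ ≤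
      (1 + max 1 α) * (‖a + b‖ ^ α + ‖a‖ ^ α) * ‖b‖ := by
    have := aux_F_diff α hα (a + b) a
    simpa using this
  have step2 : ‖((‖b‖ ^ α : ℝ) : ℂ) * b‖ = ‖b‖ ^ α * ‖b‖ := by
    rw [norm_mul, Complex.norm_real, Real.norm_eq_abs, abs_of_nonneg hbn]
  have h2pos : (0:ℝ) ≤ 2 ^ α := Real.rpow_nonneg (by norm_num) α
  calc ‖((‖a + b‖ ^ α : ℝ) : ℂ) * (a + b) - ((‖a‖ ^ α : ℝ) : ℂ) * a - ((‖b‖ ^ α : ℝ) : ℂ) * b‖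
      ≤ ‖((‖a + b‖ ^ α : ℝ) : ℂ) * (a + b) - ((‖a‖ ^ α : ℝ) : ℂ) * a‖
        + ‖((‖b‖ ^ α : ℝ) : ℂ) * b‖ := norm_sub_le _ _
    _ ≤ (1 + max 1 α) * (‖a + b‖ ^ α + ‖a‖ ^ α) * ‖b‖ + ‖b‖ ^ α * ‖b‖ := by
        rw [step2] at *; linarith [step1]
    _ ≤ (1 + max 1 α) * ((2 ^ α + 1) * ‖a‖ ^ α) * ‖b‖ + ‖b‖ ^ α * ‖a‖ := by
        have hbb : ‖b‖ ^ α * ‖b‖ ≤ ‖b‖ ^ α * ‖a‖ := mul_le_mul_of_nonneg_left h hbn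
        have : (1 + max 1 α) * (‖a + b‖ ^ α + ‖a‖ ^ α) * ‖b‖
            ≤ (1 + max 1 α) * ((2 ^ α + 1) * ‖a‖ ^ α) * ‖b‖ := by
          apply mul_le_mul_of_nonneg_right _ (norm_nonneg b)
          apply mul_le_mul_of_nonneg_left _ (by linarith)
          nlinarith [hab]
        linarith
    _ ≤ ((1 + max 1 α) * (2 ^ α + 1) + 1) * (‖a‖ ^ α * ‖b‖ + ‖b‖ ^ α * ‖a‖) := by
        have hK : (0:ℝ) ≤ (1 + max 1 α) * (2 ^ α + 1) := by nlinarith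
        nlinarith [mul_nonneg hK (mul_nonneg hbn (norm_nonneg a)),
          mul_nonneg han (norm_nonneg b)]

/-- Sum of rpow estimate. -/
private lemma aux_rpow_sum {ι : Type*} (α : ℝ) (hα : 0 < α) (s : Finset ι) (x : ι → ℝ)
    (hx : ∀ i ∈ s, 0 ≤ x i) :
    (∑ i ∈ s, x i) ^ α ≤ (s.card : ℝ) ^ α * ∑ i ∈ s, x i ^ α := by
  set T := ∑ i ∈ s, x i ^ α with hT
  have hTnn : 0 ≤ T := Finset.sum_nonneg fun i hi => Real.rpow_nonneg (hx i hi) α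
  have hbound : ∀ i ∈ s, x i ≤ T ^ (1/α) := by
    intro i hi
    have h1 : x i ^ α ≤ T := Finset.single_le_sum
      (fun j hj => Real.rpow_nonneg (hx j hj) α) hi
    have := Real.rpow_le_rpow (Real.rpow_nonneg (hx i hi) α) h1 (le_of_lt (by positivity : (0:ℝ) < 1/α))
    rwa [← Real.rpow_mul (hx i hi), mul_one_div, div_self (ne_of_gt hα),
      Real.rpow_one] at this
  have hsum : ∑ i ∈ s, x i ≤ (s.card : ℝ) * T ^ (1/α) := by
    calc ∑ i ∈ s, x i ≤ ∑ _i ∈ s, T ^ (1/α) := Finset.sum_le_sum hbound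
      _ = (s.card : ℝ) * T ^ (1/α) := by rw [Finset.sum_const, nsmul_eq_mul]
  calc (∑ i ∈ s, x i) ^ α ≤ ((s.card : ℝ) * T ^ (1/α)) ^ α :=
      Real.rpow_le_rpow (Finset.sum_nonneg hx) hsum (le_of_lt hα)
    _ = (s.card : ℝ) ^ α * T := by
        rw [Real.mul_rpow (Nat.cast_nonneg _) (Real.rpow_nonneg hTnn _),
          ← Real.rpow_mul hTnn, one_div, inv_mul_cancel₀ (ne_of_gt hα), Real.rpow_one]

/-- Main induction lemma. -/
private lemma aux_main {ι : Type*} [DecidableEq ι] (α : ℝ) (hα : 0 < α) (n : ℕ) :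
    ∃ C : ℝ, 0 ≤ C ∧ ∀ (s : Finset ι) (z : ι → ℂ), s.card ≤ n →
      ‖((‖∑ j ∈ s, z j‖ ^ α : ℝ) : ℂ) * (∑ j ∈ s, z j) - ∑ j ∈ s, ((‖z j‖ ^ α : ℝ) : ℂ) * z j‖
        ≤ C * ∑ p ∈ s.offDiag, ‖z p.1‖ ^ α * ‖z p.2‖ := by
  induction n with
  | zero =>
    refine ⟨0, le_refl 0, fun s z hs => ?_⟩
    rw [Finset.card_eq_zero.mp (Nat.le_zero.mp hs)]
    simp [Real.zero_rpow (ne_of_gt hα)]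
  | succ n ih =>
    obtain ⟨C, hC, hrec⟩ := ih
    set C1 : ℝ := (1 + max 1 α) * (2 ^ α + 1) + 1 with hC1def
    have hC1 : 0 ≤ C1 := by
      have : (1:ℝ) ≤ max 1 α := le_max_left 1 α
      have h2pos : (0:ℝ) ≤ 2 ^ α := Real.rpow_nonneg (by norm_num) α
      nlinarith
    have hnα : (0:ℝ) ≤ (n:ℝ) ^ α := Real.rpow_nonneg (Nat.cast_nonneg n) α
    refine ⟨C1 * ((n:ℝ) ^ α + 1) + C, by nlinarith, fun s z hs => ?_⟩
    have hterm_nonneg : ∀ p ∈ s.offDiag, (0:ℝ) ≤ ‖z p.1‖ ^ α * ‖z p.2‖ := fun p _ =>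
      mul_nonneg (Real.rpow_nonneg (norm_nonneg _) α) (norm_nonneg _)
    set Ω := ∑ p ∈ s.offDiag, ‖z p.1‖ ^ α * ‖z p.2‖ with hΩ
    have hΩnn : 0 ≤ Ω := Finset.sum_nonneg hterm_nonneg
    rcases Finset.eq_empty_or_nonempty s with rfl | ⟨a, ha⟩
    · simp [Real.zero_rpow (ne_of_gt hα)]
      positivity
    · set s' := s.erase a with hs'
      have hins : insert a s' = s := Finset.insert_erase ha
      have hanotin : a ∉ s' := Finset.notMem_erase a s
      have hcard : s'.card ≤ n := by
        have h1 : s'.card = s.card - 1 := Finset.card_erase_of_mem ha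
        have h2 : 0 < s.card := Finset.card_pos.mpr ⟨a, ha⟩
        omega
      have hsum : ∑ j ∈ s, z j = (∑ j ∈ s', z j) + z a := by
        rw [← hins, Finset.sum_insert hanotin]; ring
      have hsumF : ∑ j ∈ s, ((‖z j‖ ^ α : ℝ) : ℂ) * z j
          = ((‖z a‖ ^ α : ℝ) : ℂ) * z a + ∑ j ∈ s', ((‖z j‖ ^ α : ℝ) : ℂ) * z j := by
        rw [← hins, Finset.sum_insert hanotin]
      set S' := ∑ j ∈ s', z j with hS'
      -- estimates for cross sums
      have hsub1 : s' ×ˢ {a} ⊆ s.offDiag := by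
        intro p hp
        rw [Finset.mem_product, Finset.mem_singleton] at hp
        rw [Finset.mem_offDiag]
        refine ⟨Finset.erase_subset a s hp.1, hp.2 ▸ ha, ?_⟩
        rw [hp.2]; exact Finset.ne_of_mem_erase hp.1
      have hsub2 : {a} ×ˢ s' ⊆ s.offDiag := by
        intro p hp
        rw [Finset.mem_product, Finset.mem_singleton] at hp
        rw [Finset.mem_offDiag]
        refine ⟨hp.1 ▸ ha, Finset.erase_subset a s hp.2, ?_⟩
        rw [hp.1]; exact (Finset.ne_of_mem_erase hp.2).symm
      have hsub3 : s'.offDiag ⊆ s.offDiag := Finset.offDiag_mono (Finset.erase_subset a s)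
      have hcross1 : ∑ j ∈ s', ‖z j‖ ^ α * ‖z a‖ ≤ Ω := by
        calc ∑ j ∈ s', ‖z j‖ ^ α * ‖z a‖
            = ∑ p ∈ s' ×ˢ {a}, ‖z p.1‖ ^ α * ‖z p.2‖ := by
              rw [Finset.sum_product, Finset.sum_comm]
              simp
          _ ≤ Ω := Finset.sum_le_sum_of_subset_of_nonneg hsub1
              (fun p hp _ => hterm_nonneg p hp)
      have hcross2 : ∑ j ∈ s', ‖z a‖ ^ α * ‖z j‖ ≤ Ω := by
        calc ∑ j ∈ s', ‖z a‖ ^ α * ‖z j‖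
            = ∑ p ∈ {a} ×ˢ s', ‖z p.1‖ ^ α * ‖z p.2‖ := by
              rw [Finset.sum_product]
              simp
          _ ≤ Ω := Finset.sum_le_sum_of_subset_of_nonneg hsub2
              (fun p hp _ => hterm_nonneg p hp)
      have hcross3 : ∑ p ∈ s'.offDiag, ‖z p.1‖ ^ α * ‖z p.2‖ ≤ Ω :=
        Finset.sum_le_sum_of_subset_of_nonneg hsub3 (fun p hp _ => hterm_nonneg p hp)
      -- norm estimates on S'
      have hnormS' : ‖S'‖ ≤ ∑ j ∈ s', ‖z j‖ := norm_sum_le _ _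
      have hS'α : ‖S'‖ ^ α ≤ (n:ℝ) ^ α * ∑ j ∈ s', ‖z j‖ ^ α := by
        calc ‖S'‖ ^ α ≤ (∑ j ∈ s', ‖z j‖) ^ α :=
            Real.rpow_le_rpow (norm_nonneg _) hnormS' (le_of_lt hα)
          _ ≤ (s'.card : ℝ) ^ α * ∑ j ∈ s', ‖z j‖ ^ α :=
            aux_rpow_sum α hα s' _ (fun i _ => norm_nonneg _)
          _ ≤ (n:ℝ) ^ α * ∑ j ∈ s', ‖z j‖ ^ α := by
            apply mul_le_mul_of_nonneg_right
            · exact Real.rpow_le_rpow (Nat.cast_nonneg _) (Nat.cast_le.mpr hcard) (le_of_lt hα)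
            · exact Finset.sum_nonneg fun i _ => Real.rpow_nonneg (norm_nonneg _) α
      have hbound1 : ‖S'‖ ^ α * ‖z a‖ ≤ (n:ℝ) ^ α * Ω := by
        calc ‖S'‖ ^ α * ‖z a‖ ≤ ((n:ℝ) ^ α * ∑ j ∈ s', ‖z j‖ ^ α) * ‖z a‖ :=
            mul_le_mul_of_nonneg_right hS'α (norm_nonneg _)
          _ = (n:ℝ) ^ α * ∑ j ∈ s', ‖z j‖ ^ α * ‖z a‖ := by
              rw [mul_assoc, Finset.sum_mul]
          _ ≤ (n:ℝ) ^ α * Ω := mul_le_mul_of_nonneg_left hcross1 hnα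
      have hbound2 : ‖z a‖ ^ α * ‖S'‖ ≤ Ω := by
        calc ‖z a‖ ^ α * ‖S'‖ ≤ ‖z a‖ ^ α * ∑ j ∈ s', ‖z j‖ :=
            mul_le_mul_of_nonneg_left hnormS' (Real.rpow_nonneg (norm_nonneg _) α)
          _ = ∑ j ∈ s', ‖z a‖ ^ α * ‖z j‖ := by rw [Finset.mul_sum]
          _ ≤ Ω := hcross2
      -- split
      have hsplit := aux_split_two α hα S' (z a)
      have hrec' := hrec s' z hcard
      calc ‖((‖∑ j ∈ s, z j‖ ^ α : ℝ) : ℂ) * (∑ j ∈ s, z j) - ∑ j ∈ s, ((‖z j‖ ^ α : ℝ) : ℂ) * z j‖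
          = ‖(((‖S' + z a‖ ^ α : ℝ) : ℂ) * (S' + z a) - ((‖S'‖ ^ α : ℝ) : ℂ) * S'
              - ((‖z a‖ ^ α : ℝ) : ℂ) * z a)
            + (((‖S'‖ ^ α : ℝ) : ℂ) * S' - ∑ j ∈ s', ((‖z j‖ ^ α : ℝ) : ℂ) * z j)‖ := by
            rw [hsum, hsumF]; congr 1; ring
        _ ≤ ‖((‖S' + z a‖ ^ α : ℝ) : ℂ) * (S' + z a) - ((‖S'‖ ^ α : ℝ) : ℂ) * S'
              - ((‖z a‖ ^ α : ℝ) : ℂ) * z a‖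
            + ‖((‖S'‖ ^ α : ℝ) : ℂ) * S' - ∑ j ∈ s', ((‖z j‖ ^ α : ℝ) : ℂ) * z j‖ :=
            norm_add_le _ _
        _ ≤ C1 * (‖S'‖ ^ α * ‖z a‖ + ‖z a‖ ^ α * ‖S'‖)
            + C * ∑ p ∈ s'.offDiag, ‖z p.1‖ ^ α * ‖z p.2‖ := add_le_add hsplit hrec'
        _ ≤ C1 * ((n:ℝ) ^ α * Ω + Ω) + C * Ω := by
            have := add_le_add hbound1 hbound2
            have h1 : C1 * (‖S'‖ ^ α * ‖z a‖ + ‖z a‖ ^ α * ‖S'‖)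
                ≤ C1 * ((n:ℝ) ^ α * Ω + Ω) := mul_le_mul_of_nonneg_left this hC1
            have h2 : C * ∑ p ∈ s'.offDiag, ‖z p.1‖ ^ α * ‖z p.2‖ ≤ C * Ω :=
              mul_le_mul_of_nonneg_left hcross3 hC
            linarith
        _ = (C1 * ((n:ℝ) ^ α + 1) + C) * Ω := by ring

theorem nonlinearity_splitting_many_terms
    (α : ℝ) (hα : 0 < α) (ℓ : ℕ) (hℓ : 2 ≤ ℓ) :
    ∃ C : ℝ, ∀ z : Fin ℓ → ℂ,
      ‖((‖∑ j, z j‖ ^ α : ℝ) : ℂ) * (∑ j, z j) - ∑ j, ((‖z j‖ ^ α : ℝ) : ℂ) * z j‖ ≤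
        C * ∑ p ∈ Finset.univ.offDiag, ‖z p.1‖ ^ α * ‖z p.2‖ := by
  obtain ⟨C, _, h⟩ := aux_main (ι := Fin ℓ) α hα ℓ
  exact ⟨C, fun z => h Finset.univ z (by simp)⟩
end
end
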